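/- arXiv:1612.03408 — 3 statements merged into one kernel-verified Lean document; each statement's English description precedes it below -/
import Mathlib

section
/- Let A and B be commutative rings with unity, f : A → B a ring homomorphism, and J an ideal of B. For every finitely generated ideal 𝔟 of A, one has the equality kgr_{A⋈^f J}(𝔟^e, A⋈^f J) = min{ kgr_A(𝔟, A), kgr_A(𝔟, J) }, where 𝔟^e = 𝔟(A⋈^f J). -/
/-- The Koszul cochain differential of the complex `Hom(K_•(x), M)`, described explicitly:
the degree-`i` term is the module of `M`-valued functions on the `i`-element subsets of
`Fin n`, and the differential is the usual alternating-sum formula. -/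
noncomputable def koszulMap (A : Type*) [CommRing A] (M : Type*) [AddCommGroup M]
    [Module A M] {n : ℕ} (x : Fin n → A) (i : ℕ) :
    ({s : Finset (Fin n) // s.card = i} → M) →ₗ[A]
      ({s : Finset (Fin n) // s.card = i + 1} → M) where
  toFun g t := ∑ j ∈ t.1.attach,
    (((-1 : A) ^ ((t.1.filter (fun k => k < j.1)).card)) * x j.1) •
      g ⟨t.1.erase j.1, by
        rw [Finset.card_erase_of_mem j.2, t.2]; omega⟩

  map_add' g h := funext fun t => by
    simp [smul_add, Finset.sum_add_distrib]
  map_smul' a g := funext fun t => by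
    simp only [Pi.smul_apply, RingHom.id_apply, Finset.smul_sum]
    exact Finset.sum_congr rfl fun j _ => by
      rw [smul_smul, smul_smul, mul_comm]

/-- Nonvanishing of the `i`-th cohomology `H^i(Hom(K_•(x), M))` of the Koszul
cochain complex. -/
def koszulCohomologyNeZero (A : Type*) [CommRing A] (M : Type*) [AddCommGroup M]
    [Module A M] {n : ℕ} (x : Fin n → A) : ℕ → Prop
  | 0 => LinearMap.ker (koszulMap A M x 0) ≠ ⊥
  | (i + 1) => ¬ (LinearMap.ker (koszulMap A M x (i + 1)) ≤
      LinearMap.range (koszulMap A M x i))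

/-- The Koszul grade of a finite sequence `x` on `M`:
`inf { i : H^i(Hom(K_•(x), M)) ≠ 0 }` (an element of `ℕ∞`, equal to `⊤` if all
cohomology vanishes). -/
noncomputable def kgrSeq (A : Type*) [CommRing A] (M : Type*) [AddCommGroup M]
    [Module A M] {n : ℕ} (x : Fin n → A) : ℕ∞ :=
  sInf {i : ℕ∞ | ∃ k : ℕ, i = k ∧ koszulCohomologyNeZero A M x k}

/-- The Koszul grade `kgr_A(𝔞, M)` of an arbitrary ideal `𝔞` on `M`: the supremum of the
Koszul grades of finite sequences contained in `𝔞` (equivalently, of the finitely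
generated subideals of `𝔞`). -/
noncomputable def kgr (A : Type*) [CommRing A] (𝔞 : Ideal A) (M : Type*)
    [AddCommGroup M] [Module A M] : ℕ∞ :=
  ⨆ (n : ℕ) (x : Fin n → A) (_ : ∀ j, x j ∈ 𝔞), kgrSeq A M x

/-- The height of an ideal: the infimum of the heights of the primes containing it. -/
noncomputable def idealHeight (A : Type*) [CommRing A] (𝔞 : Ideal A) : ℕ∞ :=
  ⨅ (p : PrimeSpectrum A) (_ : 𝔞 ≤ p.asIdeal), Order.height p

/-- A commutative ring `R` is Cohen-Macaulay in the sense of a class `𝒜` of ideals if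
`height 𝔞 = kgr_R(𝔞, R)` for every `𝔞 ∈ 𝒜`. -/
def IsCMSense (R : Type*) [CommRing R] (𝒜 : Set (Ideal R)) : Prop :=
  ∀ 𝔞 ∈ 𝒜, idealHeight R 𝔞 = kgr R 𝔞 R

/-- Cohen-Macaulay in the sense of ideals. -/
def IsCMIdeals (R : Type*) [CommRing R] : Prop :=
  ∀ 𝔞 : Ideal R, idealHeight R 𝔞 = kgr R 𝔞 R

/-- Cohen-Macaulay in the sense of maximal ideals. -/
def IsCMMaximal (R : Type*) [CommRing R] : Prop :=
  ∀ 𝔪 : Ideal R, 𝔪.IsMaximal → idealHeight R 𝔪 = kgr R 𝔪 R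

/-- The amalgamation `A ⋈^f J = {(a, f a + j) : a ∈ A, j ∈ J}` of `A` with `B` along the
ideal `J` of `B` with respect to `f : A →+* B`, as a subring of `A × B`. -/
def amalgamation {A B : Type*} [CommRing A] [CommRing B] (f : A →+* B) (J : Ideal B) :
    Subring (A × B) where
  carrier := {p | p.2 - f p.1 ∈ J}
  zero_mem' := by simp
  one_mem' := by simp
  add_mem' := fun {p q} hp hq => by
    have := J.add_mem hp hq
    simpa [add_sub_add_comm] using this
  neg_mem' := fun {p} hp => by
    show (-p).2 - f ((-p).1) ∈ J
    have key : (-p).2 - f ((-p).1) = -(p.2 - f p.1) := by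
      simp only [Prod.fst_neg, Prod.snd_neg, map_neg]; ring
    rw [key]
    exact J.neg_mem hp
  mul_mem' := fun {p q} hp hq => by
    show (p * q).2 - f ((p * q).1) ∈ J
    have key : (p * q).2 - f ((p * q).1)
        = p.2 * (q.2 - f q.1) + (p.2 - f p.1) * f q.1 := by
      simp only [Prod.fst_mul, Prod.snd_mul, map_mul]; ring
    rw [key]
    exact J.add_mem (J.mul_mem_left _ hq) (J.mul_mem_right _ hp)

/-- The natural embedding `ι_A : A → A ⋈^f J`, `a ↦ (a, f a)`. -/
def amalgIota {A B : Type*} [CommRing A] [CommRing B] (f : A →+* B) (J : Ideal B) :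
    A →+* amalgamation f J where
  toFun a := ⟨(a, f a), show (a, f a).2 - f (a, f a).1 ∈ J by simp⟩
  map_one' := Subtype.ext (by simp)
  map_mul' a b := Subtype.ext (by simp)
  map_zero' := Subtype.ext (by simp)
  map_add' a b := Subtype.ext (by simp)

/-- The extension `𝔞^e = 𝔞(A ⋈^f J)` of an ideal `𝔞` of `A` along `ι_A`. -/
noncomputable def idealExt {A B : Type*} [CommRing A] [CommRing B] (f : A →+* B)
    (J : Ideal B) (𝔞 : Ideal A) : Ideal ↥(amalgamation f J) :=
  Ideal.map (amalgIota f J) 𝔞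

/-- `kgr_A(𝔞, J)` where the ideal `J` of `B` is viewed as an `A`-module via `f`. -/
noncomputable def kgrIdeal {A B : Type*} [CommRing A] [CommRing B] (f : A →+* B)
    (J : Ideal B) (𝔞 : Ideal A) : ℕ∞ :=
  letI : Module A J := Module.compHom J f
  kgr A 𝔞 J

/-- The ideal `𝔭'^f = 𝔭 ⋈^f J = {(p, f p + j) : p ∈ 𝔭, j ∈ J}` of `A ⋈^f J`. -/
def primeAmalg {A B : Type*} [CommRing A] [CommRing B] (f : A →+* B) (J : Ideal B)
    (𝔭 : Ideal A) : Ideal ↥(amalgamation f J) where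
  carrier := {z | (z : A × B).1 ∈ 𝔭}
  zero_mem' := by simp
  add_mem' := fun {a b} ha hb => 𝔭.add_mem ha hb
  smul_mem' := fun c {z} hz => 𝔭.mul_mem_left (c : A × B).1 hz

/-- The ideal `𝔮̄^f = {(a, f a + j) : a ∈ A, j ∈ J, f a + j ∈ 𝔮}` of `A ⋈^f J`. -/
def qbarAmalg {A B : Type*} [CommRing A] [CommRing B] (f : A →+* B) (J : Ideal B)
    (𝔮 : Ideal B) : Ideal ↥(amalgamation f J) where
  carrier := {z | (z : A × B).2 ∈ 𝔮}
  zero_mem' := by simp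
  add_mem' := fun {a b} ha hb => 𝔮.add_mem ha hb
  smul_mem' := fun c {z} hz => 𝔮.mul_mem_left (c : A × B).2 hz

/-- A ring homomorphism `f : A →+* B` satisfies the going-down property. -/
def RingHom.GoesDown {A B : Type*} [CommRing A] [CommRing B] (f : A →+* B) : Prop :=
  ∀ (𝔭' 𝔭 : Ideal A), 𝔭'.IsPrime → 𝔭.IsPrime → 𝔭' ≤ 𝔭 →
    ∀ 𝔮 : Ideal B, 𝔮.IsPrime → 𝔮.comap f = 𝔭 →
      ∃ 𝔮' : Ideal B, 𝔮'.IsPrime ∧ 𝔮' ≤ 𝔮 ∧ 𝔮'.comap f = 𝔭'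

namespace KoszulAux
open Finset

variable {A : Type*} [CommRing A] {M : Type*} [AddCommGroup M] [Module A M] {n : ℕ}

/-- number of elements of `s` strictly below `j` -/
def cnt (s : Finset (Fin n)) (j : Fin n) : ℕ := (s.filter (fun k => k < j)).card

def kTerm (x : Fin n → A) {i : ℕ} (g : {s : Finset (Fin n) // s.card = i} → M)
    (t : {s : Finset (Fin n) // s.card = i + 1}) (j : Fin n) : M :=
  if h : j ∈ t.1 then
    ((-1 : A) ^ cnt t.1 j * x j) • g ⟨t.1.erase j, by
      rw [Finset.card_erase_of_mem h, t.2]; omega⟩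
  else 0

lemma koszulMap_apply (x : Fin n → A) (i : ℕ)
    (g : {s : Finset (Fin n) // s.card = i} → M) (t) :
    koszulMap A M x i g t = ∑ j ∈ t.1, kTerm x g t j := by
  rw [← Finset.sum_attach t.1 (kTerm x g t)]
  show ∑ j ∈ t.1.attach, _ = _
  refine Finset.sum_congr rfl fun j _ => ?_
  rw [kTerm, dif_pos j.2]
  rfl

lemma cnt_erase_of_not_lt {s : Finset (Fin n)} {j q : Fin n} (h : ¬ j < q) :
    cnt (s.erase j) q = cnt s q := by
  unfold cnt
  rw [Finset.filter_erase, Finset.erase_eq_of_notMem]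
  simp [h]

lemma cnt_erase_of_lt {s : Finset (Fin n)} {j q : Fin n} (hj : j ∈ s) (h : j < q) :
    cnt (s.erase j) q + 1 = cnt s q := by
  unfold cnt
  rw [Finset.filter_erase, Finset.card_erase_of_mem (by simp [hj, h])]
  have : 0 < (Finset.filter (fun k => k < q) s).card :=
    Finset.card_pos.2 ⟨j, by simp [hj, h]⟩
  omega

lemma cnt_insert_of_not_lt {s : Finset (Fin n)} {j q : Fin n} (h : ¬ q < j) :
    cnt (insert q s) j = cnt s j := by
  unfold cnt
  rw [Finset.filter_insert, if_neg h]

lemma cnt_insert_of_lt {s : Finset (Fin n)} {j q : Fin n} (hq : q ∉ s) (h : q < j) :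
    cnt (insert q s) j = cnt s j + 1 := by
  unfold cnt
  rw [Finset.filter_insert, if_pos h, Finset.card_insert_of_notMem (by simp [hq])]

lemma neg_one_pow_smul_cancel (c : ℕ) (m : M) :
    ((-1 : A) ^ c) • ((-1 : A) ^ c) • m = m := by
  rw [smul_smul, ← pow_add, Even.neg_one_pow ⟨c, rfl⟩, one_smul]

end KoszulAux
namespace KoszulAux
set_option linter.unusedSectionVars false
variable {A : Type*} [CommRing A] {M : Type*} [AddCommGroup M] [Module A M] {n : ℕ}

lemma gcongr' {i : ℕ} (g : {s : Finset (Fin n) // s.card = i} → M)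
    {a b : Finset (Fin n)} (ha : a.card = i) (hb : b.card = i) (h : a = b) :
    g ⟨a, ha⟩ = g ⟨b, hb⟩ := by subst h; rfl

/-- The standard contraction homotopy attached to the index `q`. -/
def hmt (A : Type*) [CommRing A] {M : Type*} [AddCommGroup M] [Module A M] {n : ℕ}
    (q : Fin n) {i : ℕ} (g : {s : Finset (Fin n) // s.card = i + 1} → M) :
    {s : Finset (Fin n) // s.card = i} → M :=
  fun s => if h : q ∈ s.1 then 0 else
    ((-1 : A) ^ cnt s.1 q) • g ⟨insert q s.1, by rw [Finset.card_insert_of_notMem h, s.2]⟩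

lemma homotopy_zero (x : Fin n → A) (q : Fin n)
    (g : {s : Finset (Fin n) // s.card = 0} → M) :
    hmt A q (koszulMap A M x 0 g) = x q • g := by
  funext s
  have hs : s.1 = ∅ := Finset.card_eq_zero.1 s.2
  have hq : q ∉ s.1 := by rw [hs]; simp
  rw [hmt, dif_neg hq, Pi.smul_apply, koszulMap_apply]
  show (-1:A) ^ cnt s.1 q • ∑ j ∈ insert q s.1, _ = _
  rw [Finset.sum_insert hq,
    Finset.sum_eq_zero (fun j hj => absurd (hs ▸ hj) (Finset.notMem_empty j)), add_zero,
    kTerm, dif_pos (Finset.mem_insert_self q s.1),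
    cnt_insert_of_not_lt (lt_irrefl q)]
  have hc2 : cnt s.1 q = 0 := by unfold cnt; rw [hs]; simp
  rw [hc2, pow_zero, one_smul, one_mul]
  congr 1
  exact gcongr' g _ _ (Finset.erase_insert hq)

lemma homotopy (x : Fin n → A) (q : Fin n) {i : ℕ}
    (g : {s : Finset (Fin n) // s.card = i + 1} → M) :
    koszulMap A M x i (hmt A q g) + hmt A q (koszulMap A M x (i + 1) g) = x q • g := by
  funext s
  have hev : ∀ c : ℕ, (-1:A)^c * (-1:A)^c = 1 := fun c => by
    rw [← pow_add]; exact Even.neg_one_pow ⟨c, rfl⟩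
  have negneg : ∀ (c : ℕ) (m : M), ((-1:A)^c * x q) • ((-1:A)^c) • m = x q • m := by
    intro c m
    rw [smul_smul, show (-1:A)^c * x q * (-1:A)^c = x q by
      calc (-1:A)^c * x q * (-1:A)^c = ((-1:A)^c * (-1:A)^c) * x q := by ring
        _ = x q := by rw [hev c, one_mul]]
  have negneg2 : ∀ (c : ℕ) (m : M), ((-1:A)^c) • ((-1:A)^c * x q) • m = x q • m := by
    intro c m
    rw [smul_smul, show (-1:A)^c * ((-1:A)^c * x q) = x q by
      calc (-1:A)^c * ((-1:A)^c * x q) = ((-1:A)^c * (-1:A)^c) * x q := by ring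
        _ = x q := by rw [hev c, one_mul]]
  by_cases hq : q ∈ s.1
  · rw [Pi.add_apply, hmt, dif_pos hq, add_zero, koszulMap_apply]
    rw [Finset.sum_eq_single_of_mem q hq]
    · rw [kTerm, dif_pos hq, hmt,
        dif_neg (show q ∉ s.1.erase q by simp)]
      rw [cnt_erase_of_not_lt (lt_irrefl q),
        gcongr' g _ s.2 (Finset.insert_erase hq), negneg, Pi.smul_apply]
    · intro j hj hjq
      rw [kTerm, dif_pos hj, hmt, dif_pos (Finset.mem_erase.2 ⟨Ne.symm hjq, hq⟩), smul_zero]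
  · rw [Pi.add_apply, hmt, dif_neg hq, Pi.smul_apply, koszulMap_apply,
      koszulMap_apply (t := ⟨insert q s.1, by rw [Finset.card_insert_of_notMem hq, s.2]⟩)]
    show _ + (-1:A)^cnt s.1 q • ∑ j ∈ insert q s.1, _ = _
    rw [Finset.sum_insert hq, smul_add, Finset.smul_sum]
    have hqterm : (-1:A)^cnt s.1 q •
        kTerm x g ⟨insert q s.1, by rw [Finset.card_insert_of_notMem hq, s.2]⟩ q
        = x q • g s := by
      rw [kTerm, dif_pos (Finset.mem_insert_self q s.1),
        cnt_insert_of_not_lt (lt_irrefl q),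
        gcongr' g _ s.2 (Finset.erase_insert hq), negneg2]
    have key : ∀ a b c : M, b = x q • g s → a + c = 0 → a + (b + c) = x q • g s := by
      intro a b c h1 h2
      rw [add_left_comm, h2, add_zero, h1]
    refine key _ _ _ hqterm ?_
    rw [← Finset.sum_add_distrib]
    refine Finset.sum_eq_zero fun j hj => ?_
    have hjq : j ≠ q := fun h => hq (h ▸ hj)
    have hins : (insert q s.1).erase j = insert q (s.1.erase j) :=
      Finset.erase_insert_of_ne (Ne.symm hjq)
    have hqe : q ∉ s.1.erase j := fun hmem => hq (Finset.mem_of_mem_erase hmem)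
    rw [kTerm, kTerm, dif_pos hj, dif_pos (Finset.mem_insert_of_mem hj), hmt,
      dif_neg hqe,
      gcongr' g (i := i+1) _ (by rw [Finset.card_insert_of_notMem hqe,
        Finset.card_erase_of_mem hj, s.2]; omega : (insert q (s.1.erase j)).card = i + 1) hins]
    rw [smul_smul, smul_smul, ← add_smul]
    convert zero_smul A _
    by_cases hlt : j < q
    · have h1 := cnt_erase_of_lt hj hlt
      rw [cnt_insert_of_not_lt (asymm hlt), ← h1]
      ring
    · have hql : q < j := lt_of_le_of_ne (not_lt.1 hlt) (Ne.symm hjq)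
      rw [cnt_erase_of_not_lt (by exact fun h => hlt h), cnt_insert_of_lt hq hql]
      ring

end KoszulAux
namespace KoszulAux
open Finset
set_option linter.unusedSectionVars false
variable {A : Type*} [CommRing A] {M : Type*} [AddCommGroup M] [Module A M] {n : ℕ}

lemma neg_one_pow_mul_self (c : ℕ) : (-1:A)^c * (-1:A)^c = 1 := by
  rw [← pow_add]; exact Even.neg_one_pow ⟨c, rfl⟩

section Pivot
variable (p : Fin (n + 1))

def mapS (s : Finset (Fin n)) : Finset (Fin (n + 1)) := s.map p.succAboveEmb

noncomputable def preS (t : Finset (Fin (n + 1))) : Finset (Fin n) :=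
  t.preimage p.succAbove Fin.succAbove_right_injective.injOn

lemma p_not_mem_mapS (s : Finset (Fin n)) : p ∉ mapS p s := by
  intro h
  obtain ⟨m, _, hm⟩ := Finset.mem_map.1 h
  exact Fin.succAbove_ne p m hm

lemma card_mapS (s : Finset (Fin n)) : (mapS p s).card = s.card := Finset.card_map _

lemma preS_mapS (s : Finset (Fin n)) : preS p (mapS p s) = s := by
  ext m; rw [preS, Finset.mem_preimage]; exact Finset.mem_map' _

lemma mapS_preS {t : Finset (Fin (n + 1))} (hp : p ∉ t) : mapS p (preS p t) = t := by
  ext j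
  rw [mapS, Finset.mem_map]
  constructor
  · rintro ⟨m, hm, rfl⟩
    rw [preS, Finset.mem_preimage] at hm
    exact hm
  · intro hj
    obtain ⟨m, hm⟩ := Fin.exists_succAbove_eq (show j ≠ p from fun h => hp (h ▸ hj))
    exact ⟨m, by rw [preS, Finset.mem_preimage, hm]; exact hj,
      by rw [Fin.succAboveEmb_apply, hm]⟩

lemma card_preS {t : Finset (Fin (n + 1))} (hp : p ∉ t) : (preS p t).card = t.card := by
  conv_rhs => rw [← mapS_preS p hp]
  rw [card_mapS]

lemma cnt_mapS (s : Finset (Fin n)) (m : Fin n) :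
    cnt (mapS p s) (p.succAbove m) = cnt s m := by
  unfold cnt mapS
  rw [Finset.filter_map, Finset.card_map]
  congr 1
  refine Finset.filter_congr fun k _ => ?_
  simp [Fin.succAbove_lt_succAbove_iff]

lemma erase_mapS (s : Finset (Fin n)) (m : Fin n) :
    (mapS p s).erase (p.succAbove m) = mapS p (s.erase m) :=
  (Finset.map_erase _ _ _).symm

/-- `δ s`: the number of elements of `s` whose castSucc is below the pivot. -/
def dlt (s : Finset (Fin n)) : ℕ := (s.filter (fun m => m.castSucc < p)).card

lemma cnt_mapS_p (s : Finset (Fin n)) : cnt (mapS p s) p = dlt p s := by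
  unfold cnt mapS dlt
  rw [Finset.filter_map, Finset.card_map]
  congr 1
  refine Finset.filter_congr fun k _ => ?_
  simp [Fin.succAbove_lt_iff_castSucc_lt]

lemma dlt_erase_of_lt {s : Finset (Fin n)} {m : Fin n} (hm : m ∈ s)
    (h : m.castSucc < p) : dlt p (s.erase m) + 1 = dlt p s := by
  unfold dlt
  rw [Finset.filter_erase, Finset.card_erase_of_mem (by simp [hm, h])]
  have : 0 < (Finset.filter (fun k => k.castSucc < p) s).card :=
    Finset.card_pos.2 ⟨m, by simp [hm, h]⟩
  omega

lemma dlt_erase_of_not_lt {s : Finset (Fin n)} {m : Fin n}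
    (h : ¬ m.castSucc < p) : dlt p (s.erase m) = dlt p s := by
  unfold dlt
  rw [Finset.filter_erase, Finset.erase_eq_of_notMem]
  simp [h]

end Pivot

section PivotMaps
variable (p : Fin (n + 1))

def alphaP {i : ℕ} (g : {s : Finset (Fin (n + 1)) // s.card = i} → M) :
    {s : Finset (Fin n) // s.card = i} → M :=
  fun s => g ⟨mapS p s.1, by rw [card_mapS, s.2]⟩

def gammaP (A : Type*) [CommRing A] {M : Type*} [AddCommGroup M] [Module A M] {n : ℕ}
    (p : Fin (n + 1)) {i : ℕ}
    (g : {s : Finset (Fin (n + 1)) // s.card = i + 1} → M) :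
    {s : Finset (Fin n) // s.card = i} → M :=
  fun s => ((-1:A) ^ dlt p s.1) • g ⟨insert p (mapS p s.1), by
    rw [Finset.card_insert_of_notMem (p_not_mem_mapS p s.1), card_mapS, s.2]⟩

noncomputable def sigmaP {i : ℕ} (h : {s : Finset (Fin n) // s.card = i} → M) :
    {s : Finset (Fin (n + 1)) // s.card = i} → M :=
  fun t => if hp : p ∈ t.1 then 0 else h ⟨preS p t.1, by rw [card_preS p hp, t.2]⟩

noncomputable def tauP (A : Type*) [CommRing A] {M : Type*} [AddCommGroup M] [Module A M] {n : ℕ}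
    (p : Fin (n + 1)) {i : ℕ} (h : {s : Finset (Fin n) // s.card = i} → M) :
    {s : Finset (Fin (n + 1)) // s.card = i + 1} → M :=
  fun t => if hp : p ∈ t.1 then
    ((-1:A) ^ dlt p (preS p (t.1.erase p))) • h ⟨preS p (t.1.erase p), by
      rw [card_preS p (Finset.notMem_erase p t.1), Finset.card_erase_of_mem hp, t.2]; omega⟩
  else 0

lemma smul_h_congr {i : ℕ} (h : {s : Finset (Fin n) // s.card = i} → M)
    {a b : Finset (Fin n)} (ha : a.card = i) (hb : b.card = i) (e : a = b)
    {c d : ℕ} (ec : c = d) :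
    ((-1:A)^c) • h ⟨a, ha⟩ = ((-1:A)^d) • h ⟨b, hb⟩ := by subst e; subst ec; rfl

lemma alphaP_sigmaP {i : ℕ} (h : {s : Finset (Fin n) // s.card = i} → M) :
    alphaP p (sigmaP p h) = h := by
  funext s
  rw [alphaP, sigmaP, dif_neg (p_not_mem_mapS p s.1)]
  exact gcongr' h _ _ (preS_mapS p s.1)

lemma alphaP_tauP {i : ℕ} (h : {s : Finset (Fin n) // s.card = i} → M) :
    alphaP p (tauP A p h) = 0 := by
  funext s
  rw [alphaP, tauP, dif_neg (p_not_mem_mapS p s.1)]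
  rfl

lemma gammaP_sigmaP {i : ℕ} (h : {s : Finset (Fin n) // s.card = i + 1} → M) :
    gammaP A p (sigmaP p h) = 0 := by
  funext s
  rw [gammaP, sigmaP, dif_pos (Finset.mem_insert_self p _), smul_zero]
  rfl

lemma gammaP_tauP {i : ℕ} (h : {s : Finset (Fin n) // s.card = i} → M) :
    gammaP A p (tauP A p h) = h := by
  funext s
  have h1 : (insert p (mapS p s.1)).erase p = mapS p s.1 :=
    Finset.erase_insert (p_not_mem_mapS p s.1)
  have h2 : preS p ((insert p (mapS p s.1)).erase p) = s.1 := by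
    rw [h1, preS_mapS]
  rw [gammaP, tauP, dif_pos (Finset.mem_insert_self p _),
    smul_h_congr h _ s.2 h2 (by rw [h2])]
  exact neg_one_pow_smul_cancel _ _

lemma sigmaP_alphaP_add_tauP_gammaP {i : ℕ}
    (g : {s : Finset (Fin (n + 1)) // s.card = i + 1} → M) :
    sigmaP p (alphaP p g) + tauP A p (gammaP A p g) = g := by
  funext t
  by_cases hp : p ∈ t.1
  · rw [Pi.add_apply, sigmaP, dif_pos hp, tauP, dif_pos hp, gammaP, zero_add]
    have h3 : p ∉ t.1.erase p := Finset.notMem_erase p t.1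
    have h1 : mapS p (preS p (t.1.erase p)) = t.1.erase p := mapS_preS p h3
    rw [neg_one_pow_smul_cancel]
    exact gcongr' g _ t.2 (by rw [h1, Finset.insert_erase hp])
  · rw [Pi.add_apply, sigmaP, dif_neg hp, tauP, dif_neg hp, add_zero, alphaP]
    exact gcongr' g _ t.2 (mapS_preS p hp)

lemma sigmaP_alphaP_zero (g : {s : Finset (Fin (n + 1)) // s.card = 0} → M) :
    sigmaP p (alphaP p g) = g := by
  funext t
  have hp : p ∉ t.1 := by
    rw [Finset.card_eq_zero.1 t.2]; simp
  rw [sigmaP, dif_neg hp, alphaP]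
  exact gcongr' g _ t.2 (mapS_preS p hp)

end PivotMaps
end KoszulAux
namespace KoszulAux
open Finset
set_option linter.unusedSectionVars false
variable {A : Type*} [CommRing A] {M : Type*} [AddCommGroup M] [Module A M] {n : ℕ}
variable (p : Fin (n + 1))

lemma sum_mapS (s : Finset (Fin n)) (F : Fin (n + 1) → M) :
    ∑ j ∈ mapS p s, F j = ∑ m ∈ s, F (p.succAbove m) := by
  rw [mapS, Finset.sum_map]
  rfl

lemma mem_mapS_succAbove {s : Finset (Fin n)} {m : Fin n} :
    p.succAbove m ∈ mapS p s ↔ m ∈ s := Finset.mem_map' _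

lemma sc1 (a : A) (c d : ℕ) :
    (-1:A)^(d+1) * ((-1:A)^c * a) * (-1:A)^d = -((-1:A)^c * a) := by
  calc (-1:A)^(d+1) * ((-1:A)^c * a) * (-1:A)^d
      = ((-1:A)^d * (-1:A)^d) * (-((-1:A)^c * a)) := by ring
    _ = -((-1:A)^c * a) := by rw [neg_one_pow_mul_self]; ring

lemma sc2 (a : A) (c d : ℕ) :
    (-1:A)^d * ((-1:A)^(c+1) * a) * (-1:A)^d = -((-1:A)^c * a) := by
  calc (-1:A)^d * ((-1:A)^(c+1) * a) * (-1:A)^d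
      = ((-1:A)^d * (-1:A)^d) * (-((-1:A)^c * a)) := by ring
    _ = -((-1:A)^c * a) := by rw [neg_one_pow_mul_self]; ring

lemma alphaP_koszulMap {i : ℕ} (y : Fin (n + 1) → A)
    (g : {s : Finset (Fin (n + 1)) // s.card = i} → M) :
    alphaP p (koszulMap A M y i g)
      = koszulMap A M (fun m => y (p.succAbove m)) i (alphaP p g) := by
  funext s
  show koszulMap A M y i g ⟨mapS p s.1, _⟩ = _
  rw [koszulMap_apply, koszulMap_apply]
  show ∑ j ∈ mapS p s.1, kTerm y g ⟨mapS p s.1, _⟩ j = _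
  rw [sum_mapS]
  refine Finset.sum_congr rfl fun m hm => ?_
  rw [kTerm, kTerm, dif_pos hm, dif_pos ((mem_mapS_succAbove p).2 hm), cnt_mapS]
  congr 1
  exact gcongr' g _ _ (erase_mapS p s.1 m)

lemma gammaP_koszulMap {i : ℕ} (y : Fin (n + 1) → A)
    (g : {s : Finset (Fin (n + 1)) // s.card = i + 1} → M) :
    gammaP A p (koszulMap A M y (i + 1) g)
      = y p • alphaP p g
        - koszulMap A M (fun m => y (p.succAbove m)) i (gammaP A p g) := by
  funext s
  show (-1:A) ^ dlt p s.1 • koszulMap A M y (i+1) g ⟨insert p (mapS p s.1), _⟩ = _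
  rw [koszulMap_apply]
  show (-1:A) ^ dlt p s.1 • ∑ j ∈ insert p (mapS p s.1), _ = _
  rw [Finset.sum_insert (p_not_mem_mapS p s.1), smul_add]
  have A1 : (-1:A) ^ dlt p s.1 • kTerm y g
      ⟨insert p (mapS p s.1), by
        rw [Finset.card_insert_of_notMem (p_not_mem_mapS p s.1), card_mapS, s.2]⟩ p
      = y p • alphaP p g s := by
    rw [kTerm, dif_pos (Finset.mem_insert_self p _),
      cnt_insert_of_not_lt (lt_irrefl p), cnt_mapS_p,
      gcongr' g _ (by rw [card_mapS, s.2] : (mapS p s.1).card = i + 1)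
        (Finset.erase_insert (p_not_mem_mapS p s.1))]
    rw [smul_smul]
    rw [show (-1:A) ^ dlt p s.1 * ((-1:A) ^ dlt p s.1 * y p) = y p by
      rw [← mul_assoc, neg_one_pow_mul_self, one_mul]]
    rfl
  rw [A1, sum_mapS, Finset.smul_sum, Pi.sub_apply, Pi.smul_apply, koszulMap_apply,
    sub_eq_add_neg, ← Finset.sum_neg_distrib]
  congr 1
  refine Finset.sum_congr rfl fun m hm => ?_
  have hne : p.succAbove m ≠ p := Fin.succAbove_ne p m
  have herase : (insert p (mapS p s.1)).erase (p.succAbove m)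
      = insert p (mapS p (s.1.erase m)) := by
    rw [Finset.erase_insert_of_ne (Ne.symm hne), erase_mapS]
  have hcard2 : (insert p (mapS p (s.1.erase m))).card = i + 1 := by
    rw [Finset.card_insert_of_notMem (p_not_mem_mapS p _), card_mapS,
      Finset.card_erase_of_mem hm, s.2]; omega
  have hg : g ⟨insert p (mapS p (s.1.erase m)), hcard2⟩
      = (-1:A) ^ dlt p (s.1.erase m) • gammaP A p g
        ⟨s.1.erase m, by rw [Finset.card_erase_of_mem hm, s.2]; omega⟩ :=
    (neg_one_pow_smul_cancel _ _).symm
  rw [kTerm, kTerm, dif_pos (Finset.mem_insert_of_mem ((mem_mapS_succAbove p).2 hm)),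
    dif_pos hm, gcongr' g _ hcard2 herase, hg]
  by_cases hchi : m.castSucc < p
  · have h1 : ¬ p < p.succAbove m := asymm ((Fin.succAbove_lt_iff_castSucc_lt p m).2 hchi)
    rw [cnt_insert_of_not_lt h1, cnt_mapS, ← dlt_erase_of_lt p hm hchi]
    rw [smul_smul, smul_smul, ← neg_smul]
    exact congrArg₂ (· • ·) (sc1 _ _ _) rfl
  · have h1 : p < p.succAbove m :=
      (Fin.lt_succAbove_iff_le_castSucc p m).2 (not_lt.1 hchi)
    rw [cnt_insert_of_lt (p_not_mem_mapS p s.1) h1, cnt_mapS, dlt_erase_of_not_lt p hchi]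
    rw [smul_smul, smul_smul, ← neg_smul]
    exact congrArg₂ (· • ·) (sc2 _ _ _) rfl

lemma gammaP_koszulMap_zero (y : Fin (n + 1) → A)
    (g : {s : Finset (Fin (n + 1)) // s.card = 0} → M) :
    gammaP A p (koszulMap A M y 0 g) = y p • alphaP p g := by
  funext s
  have hs : s.1 = ∅ := Finset.card_eq_zero.1 s.2
  have hd : dlt p s.1 = 0 := by unfold dlt; rw [hs]; simp
  show (-1:A) ^ dlt p s.1 • koszulMap A M y 0 g ⟨insert p (mapS p s.1), _⟩ = _
  rw [koszulMap_apply]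
  show (-1:A) ^ dlt p s.1 • ∑ j ∈ insert p (mapS p s.1), _ = _
  rw [Finset.sum_insert (p_not_mem_mapS p s.1), sum_mapS,
    Finset.sum_eq_zero (fun m hmm => absurd (hs ▸ hmm) (Finset.notMem_empty m)), add_zero,
    kTerm, dif_pos (Finset.mem_insert_self p _), cnt_insert_of_not_lt (lt_irrefl p),
    cnt_mapS_p, hd, pow_zero, one_smul, one_mul,
    gcongr' g _ (by rw [card_mapS, s.2] : (mapS p s.1).card = 0)
      (Finset.erase_insert (p_not_mem_mapS p s.1))]
  rfl

end KoszulAux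
namespace KoszulAux
open Finset
set_option linter.unusedSectionVars false
variable {A : Type*} [CommRing A] {M : Type*} [AddCommGroup M] [Module A M] {n : ℕ}
variable (p : Fin (n + 1))

lemma alphaP_add {i : ℕ} (g g' : {s : Finset (Fin (n + 1)) // s.card = i} → M) :
    alphaP p (g + g') = alphaP p g + alphaP p g' := rfl

lemma alphaP_zero {i : ℕ} :
    alphaP p (0 : {s : Finset (Fin (n + 1)) // s.card = i} → M) = 0 := rfl

lemma gammaP_add {i : ℕ} (g g' : {s : Finset (Fin (n + 1)) // s.card = i + 1} → M) :
    gammaP A p (g + g') = gammaP A p g + gammaP A p g' := by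
  funext s; exact smul_add _ _ _

lemma gammaP_zero {i : ℕ} :
    gammaP A p (0 : {s : Finset (Fin (n + 1)) // s.card = i + 1} → M) = 0 := by
  funext s; exact smul_zero _

lemma sigmaP_zero {i : ℕ} :
    sigmaP p (0 : {s : Finset (Fin n) // s.card = i} → M) = 0 := by
  funext t; rw [sigmaP]; split <;> rfl

lemma tauP_zero {i : ℕ} :
    tauP A p (0 : {s : Finset (Fin n) // s.card = i} → M) = 0 := by
  funext t; rw [tauP]; split
  · exact smul_zero _
  · rfl

lemma sigmaP_ne_zero {i : ℕ} {h : {s : Finset (Fin n) // s.card = i} → M} (hh : h ≠ 0) :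
    sigmaP p h ≠ 0 := fun he => hh (by rw [← alphaP_sigmaP p h, he, alphaP_zero])

lemma hmt_zero (q : Fin n) {i : ℕ} :
    hmt A q (0 : {s : Finset (Fin n) // s.card = i + 1} → M) = 0 := by
  funext s; rw [hmt]; split
  · rfl
  · exact smul_zero _

/-- If `z` lies in the span of the sequence, `z` kills `ker d⁰`. -/
lemma span_smul_ker_zero (x : Fin n → A) {z : A}
    (hz : z ∈ Ideal.span (Set.range x))
    {g : {s : Finset (Fin n) // s.card = 0} → M} (hg : koszulMap A M x 0 g = 0) :
    z • g = 0 := by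
  obtain ⟨c, hc⟩ := (Submodule.mem_span_range_iff_exists_fun A).1 hz
  rw [← hc, Finset.sum_smul]
  refine Finset.sum_eq_zero fun q _ => ?_
  rw [smul_eq_mul, mul_smul, ← homotopy_zero x q g, hg, hmt_zero, smul_zero]

/-- If `z` lies in the span of the sequence and `d g = 0` then `z • g` is a boundary. -/
lemma span_smul_boundary (x : Fin n → A) {z : A}
    (hz : z ∈ Ideal.span (Set.range x)) {i : ℕ}
    {g : {s : Finset (Fin n) // s.card = i + 1} → M}
    (hg : koszulMap A M x (i + 1) g = 0) :
    ∃ w, koszulMap A M x i w = z • g := by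
  obtain ⟨c, hc⟩ := (Submodule.mem_span_range_iff_exists_fun A).1 hz
  refine ⟨∑ q, c q • hmt A q g, ?_⟩
  rw [map_sum]
  calc ∑ q, koszulMap A M x i (c q • hmt A q g)
      = ∑ q, c q • (x q • g) := Finset.sum_congr rfl fun q _ => by
        rw [map_smul]
        congr 1
        have h1 := homotopy x q g
        rw [hg, hmt_zero, add_zero] at h1
        exact h1
    _ = (∑ q, c q • x q) • g := by
        rw [Finset.sum_smul]
        exact (Finset.sum_congr rfl fun q _ => smul_assoc _ _ _).symm
    _ = z • g := by rw [hc]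

/-- Vanishing of cohomology transfers from the restricted sequence to the full one. -/
lemma vanish_step (y : Fin (n + 1) → A) (k : ℕ)
    (hv : ∀ j ≤ k, ¬ koszulCohomologyNeZero A M (fun m => y (p.succAbove m)) j) :
    ¬ koszulCohomologyNeZero A M y k := by
  cases k with
  | zero =>
    have h0 : LinearMap.ker (koszulMap A M (fun m => y (p.succAbove m)) 0) = ⊥ :=
      not_not.1 (hv 0 le_rfl)
    show ¬ (LinearMap.ker (koszulMap A M y 0) ≠ ⊥)
    rw [not_not, eq_bot_iff]
    intro g' hg'
    rw [LinearMap.mem_ker] at hg'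
    have h1 : koszulMap A M (fun m => y (p.succAbove m)) 0 (alphaP p g') = 0 := by
      rw [← alphaP_koszulMap, hg', alphaP_zero]
    have h2 : alphaP p g' = 0 := by
      have h3 : alphaP p g' ∈ (⊥ : Submodule A _) := h0 ▸ (LinearMap.mem_ker.2 h1)
      simpa using h3
    show g' ∈ (⊥ : Submodule A _)
    rw [Submodule.mem_bot, ← sigmaP_alphaP_zero p g', h2, sigmaP_zero]
  | succ k =>
    show ¬ ¬ _
    rw [not_not]
    intro g' hg'
    rw [LinearMap.mem_ker] at hg'
    have hx1 : LinearMap.ker (koszulMap A M (fun m => y (p.succAbove m)) (k+1)) ≤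
        LinearMap.range (koszulMap A M (fun m => y (p.succAbove m)) k) :=
      not_not.1 (hv (k+1) le_rfl)
    have hg₀ : koszulMap A M (fun m => y (p.succAbove m)) (k+1) (alphaP p g') = 0 := by
      rw [← alphaP_koszulMap, hg', alphaP_zero]
    obtain ⟨w₀, hw₀⟩ := LinearMap.mem_range.1 (hx1 (LinearMap.mem_ker.2 hg₀))
    have hγ : koszulMap A M (fun m => y (p.succAbove m)) k (gammaP A p g')
        = y p • alphaP p g' := by
      have h := gammaP_koszulMap p y g'
      rw [hg', gammaP_zero, eq_comm, sub_eq_zero] at h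
      exact h.symm
    cases k with
    | zero =>
      have hker0 : LinearMap.ker (koszulMap A M (fun m => y (p.succAbove m)) 0) = ⊥ :=
        not_not.1 (hv 0 (by omega))
      have hd0 : koszulMap A M (fun m => y (p.succAbove m)) 0
          (gammaP A p g' - y p • w₀) = 0 := by
        rw [map_sub, map_smul, hw₀, hγ, sub_self]
      have hγeq : gammaP A p g' = y p • w₀ := by
        have h3 : gammaP A p g' - y p • w₀ ∈ (⊥ : Submodule A _) :=
          hker0 ▸ (LinearMap.mem_ker.2 hd0)
        rw [Submodule.mem_bot, sub_eq_zero] at h3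
        exact h3
      refine ⟨sigmaP p w₀, ?_⟩
      have hαd : alphaP p (koszulMap A M y 0 (sigmaP p w₀)) = alphaP p g' := by
        rw [alphaP_koszulMap, alphaP_sigmaP, hw₀]
      have hγd : gammaP A p (koszulMap A M y 0 (sigmaP p w₀)) = gammaP A p g' := by
        rw [gammaP_koszulMap_zero, alphaP_sigmaP, hγeq]
      calc koszulMap A M y 0 (sigmaP p w₀)
          = sigmaP p (alphaP p (koszulMap A M y 0 (sigmaP p w₀)))
            + tauP A p (gammaP A p (koszulMap A M y 0 (sigmaP p w₀))) :=
            (sigmaP_alphaP_add_tauP_gammaP p _).symm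
        _ = sigmaP p (alphaP p g') + tauP A p (gammaP A p g') := by rw [hαd, hγd]
        _ = g' := sigmaP_alphaP_add_tauP_gammaP p g'
    | succ k' =>
      have hker : LinearMap.ker (koszulMap A M (fun m => y (p.succAbove m)) (k'+1)) ≤
          LinearMap.range (koszulMap A M (fun m => y (p.succAbove m)) k') :=
        not_not.1 (hv (k'+1) (by omega))
      have hmem : koszulMap A M (fun m => y (p.succAbove m)) (k'+1)
          (gammaP A p g' - y p • w₀) = 0 := by
        rw [map_sub, map_smul, hγ, hw₀, sub_self]
      obtain ⟨v, hv'⟩ := LinearMap.mem_range.1 (hker (LinearMap.mem_ker.2 hmem))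
      refine ⟨sigmaP p w₀ + tauP A p (-v), ?_⟩
      have hαu : alphaP p (sigmaP p w₀ + tauP A p (-v)) = w₀ := by
        rw [alphaP_add, alphaP_sigmaP, alphaP_tauP, add_zero]
      have hγu : gammaP A p (sigmaP p w₀ + tauP A p (-v)) = -v := by
        rw [gammaP_add, gammaP_sigmaP, gammaP_tauP, zero_add]
      have hαd : alphaP p (koszulMap A M y (k'+1) (sigmaP p w₀ + tauP A p (-v)))
          = alphaP p g' := by
        rw [alphaP_koszulMap, hαu, hw₀]
      have hγd : gammaP A p (koszulMap A M y (k'+1) (sigmaP p w₀ + tauP A p (-v)))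
          = gammaP A p g' := by
        rw [gammaP_koszulMap, hαu, hγu, map_neg, hv', sub_neg_eq_add]
        abel
      calc koszulMap A M y (k'+1) (sigmaP p w₀ + tauP A p (-v))
          = sigmaP p (alphaP p (koszulMap A M y (k'+1) (sigmaP p w₀ + tauP A p (-v))))
            + tauP A p (gammaP A p (koszulMap A M y (k'+1)
                (sigmaP p w₀ + tauP A p (-v)))) :=
            (sigmaP_alphaP_add_tauP_gammaP p _).symm
        _ = sigmaP p (alphaP p g') + tauP A p (gammaP A p g') := by rw [hαd, hγd]
        _ = g' := sigmaP_alphaP_add_tauP_gammaP p g'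

/-- Nonvanishing of cohomology transfers from the restricted sequence to the full one,
if the extra element lies in the span of the restricted one. -/
lemma nonvanish_step (y : Fin (n + 1) → A)
    (hz : y p ∈ Ideal.span (Set.range (fun m => y (p.succAbove m)))) (k : ℕ)
    (hk : koszulCohomologyNeZero A M (fun m => y (p.succAbove m)) k) :
    koszulCohomologyNeZero A M y k := by
  cases k with
  | zero =>
    obtain ⟨g, hg, hg0⟩ := (Submodule.ne_bot_iff _).1 hk
    rw [LinearMap.mem_ker] at hg
    show LinearMap.ker (koszulMap A M y 0) ≠ ⊥
    rw [Submodule.ne_bot_iff]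
    refine ⟨sigmaP p g, LinearMap.mem_ker.2 ?_, sigmaP_ne_zero p hg0⟩
    have hα : alphaP p (koszulMap A M y 0 (sigmaP p g)) = 0 := by
      rw [alphaP_koszulMap, alphaP_sigmaP, hg]
    have hγ : gammaP A p (koszulMap A M y 0 (sigmaP p g)) = 0 := by
      rw [gammaP_koszulMap_zero, alphaP_sigmaP]
      exact span_smul_ker_zero _ hz hg
    calc koszulMap A M y 0 (sigmaP p g)
        = sigmaP p (alphaP p (koszulMap A M y 0 (sigmaP p g)))
          + tauP A p (gammaP A p (koszulMap A M y 0 (sigmaP p g))) :=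
          (sigmaP_alphaP_add_tauP_gammaP p _).symm
      _ = 0 := by rw [hα, hγ, sigmaP_zero, tauP_zero, add_zero]
  | succ k =>
    have hex : ∃ g, koszulMap A M (fun m => y (p.succAbove m)) (k+1) g = 0 ∧
        g ∉ LinearMap.range (koszulMap A M (fun m => y (p.succAbove m)) k) := by
      by_contra hcon
      push_neg at hcon
      exact hk fun g hgk => hcon g (LinearMap.mem_ker.1 hgk)
    obtain ⟨g, hg, hgr⟩ := hex
    obtain ⟨w, hw⟩ := span_smul_boundary _ hz hg
    show ¬ _
    intro hle
    have hαu : alphaP p (sigmaP p g + tauP A p w) = g := by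
      rw [alphaP_add, alphaP_sigmaP, alphaP_tauP, add_zero]
    have hγu : gammaP A p (sigmaP p g + tauP A p w) = w := by
      rw [gammaP_add, gammaP_sigmaP, gammaP_tauP, zero_add]
    have hker' : koszulMap A M y (k+1) (sigmaP p g + tauP A p w) = 0 := by
      have hα : alphaP p (koszulMap A M y (k+1) (sigmaP p g + tauP A p w)) = 0 := by
        rw [alphaP_koszulMap, hαu, hg]
      have hγ : gammaP A p (koszulMap A M y (k+1) (sigmaP p g + tauP A p w)) = 0 := by
        rw [gammaP_koszulMap, hαu, hγu, hw, sub_self]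
      calc koszulMap A M y (k+1) (sigmaP p g + tauP A p w)
          = sigmaP p (alphaP p (koszulMap A M y (k+1) (sigmaP p g + tauP A p w)))
            + tauP A p (gammaP A p (koszulMap A M y (k+1) (sigmaP p g + tauP A p w))) :=
            (sigmaP_alphaP_add_tauP_gammaP p _).symm
        _ = 0 := by rw [hα, hγ, sigmaP_zero, tauP_zero, add_zero]
    obtain ⟨u, hu⟩ := LinearMap.mem_range.1 (hle (LinearMap.mem_ker.2 hker'))
    apply hgr
    exact ⟨alphaP p u, by rw [← alphaP_koszulMap, hu, hαu]⟩

/-- One-step monotonicity of the Koszul grade: dropping one element of the sequence. -/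
lemma kgrSeq_comp_succAbove_le (y : Fin (n + 1) → A) :
    kgrSeq A M (fun m => y (p.succAbove m)) ≤ kgrSeq A M y := by
  refine le_sInf ?_
  rintro i ⟨k, rfl, hk⟩
  by_cases h : ∀ j ≤ k, ¬ koszulCohomologyNeZero A M (fun m => y (p.succAbove m)) j
  · exact absurd hk (vanish_step p y k h)
  · push_neg at h
    obtain ⟨j, hj, hPj⟩ := h
    exact le_trans (sInf_le ⟨j, rfl, hPj⟩) (by exact_mod_cast hj)

/-- One-step comparison: adding a redundant element does not increase the grade. -/
lemma kgrSeq_le_comp_succAbove (y : Fin (n + 1) → A)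
    (hz : y p ∈ Ideal.span (Set.range (fun m => y (p.succAbove m)))) :
    kgrSeq A M y ≤ kgrSeq A M (fun m => y (p.succAbove m)) := by
  refine le_sInf ?_
  rintro i ⟨k, rfl, hk⟩
  exact sInf_le ⟨k, rfl, nonvanish_step p y hz k hk⟩

end KoszulAux
namespace KoszulAux
open Finset
set_option linter.unusedSectionVars false
set_option linter.deprecated false
variable {A : Type*} [CommRing A] {M : Type*} [AddCommGroup M] [Module A M]

lemma strictMono_fin_id {m : ℕ} (e : Fin m → Fin m) (he : StrictMono e) : e = id := by
  refine (he.range_inj strictMono_id).1 ?_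
  rw [Set.range_id]
  exact Set.range_eq_univ.2 (Finite.surjective_of_injective he.injective)

lemma exists_pivot {m k : ℕ} (e : Fin m → Fin (m + k + 1)) :
    ∃ p : Fin (m + k + 1), ∀ i, e i ≠ p := by
  by_contra hcon
  push_neg at hcon
  have hsub : (Finset.univ : Finset (Fin (m + k + 1))) ⊆ Finset.image e Finset.univ := by
    intro p _
    obtain ⟨i, hi⟩ := hcon p
    exact Finset.mem_image.2 ⟨i, Finset.mem_univ i, hi⟩
  have h1 := Finset.card_le_card hsub
  have h2 := Finset.card_image_le (f := e) (s := Finset.univ)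
  simp only [Finset.card_univ, Fintype.card_fin] at h1 h2
  omega

lemma comp_le_aux (k : ℕ) : ∀ {m : ℕ} (y : Fin (m + k) → A) (e : Fin m → Fin (m + k)),
    StrictMono e → kgrSeq A M (y ∘ e) ≤ kgrSeq A M y := by
  induction k with
  | zero =>
    intro m y e he
    rw [show y ∘ e = y by rw [strictMono_fin_id e he]; rfl]
  | succ k ih =>
    intro m y e he
    obtain ⟨p, hp⟩ := exists_pivot e
    have hex : ∀ i, ∃ ei', p.succAbove ei' = e i := fun i => Fin.exists_succAbove_eq (hp i)
    choose e' he' using hex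
    have he'mono : StrictMono e' := fun a b hab =>
      (Fin.succAbove_lt_succAbove_iff (p := p)).1 (by rw [he' a, he' b]; exact he hab)
    have hcomp : y ∘ e = (fun q => y (p.succAbove q)) ∘ e' := funext fun i => by
      simp only [Function.comp_apply, he' i]
    rw [hcomp]
    exact le_trans (ih (fun q => y (p.succAbove q)) e' he'mono)
      (kgrSeq_comp_succAbove_le p y)

lemma comp_ge_aux (k : ℕ) : ∀ {m : ℕ} (y : Fin (m + k) → A) (e : Fin m → Fin (m + k)),
    StrictMono e →
    (∀ q, (∀ i, e i ≠ q) → y q ∈ Ideal.span (Set.range (y ∘ e))) →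
    kgrSeq A M y ≤ kgrSeq A M (y ∘ e) := by
  induction k with
  | zero =>
    intro m y e he _
    rw [show y ∘ e = y by rw [strictMono_fin_id e he]; rfl]
  | succ k ih =>
    intro m y e he hsp
    obtain ⟨p, hp⟩ := exists_pivot e
    have hex : ∀ i, ∃ ei', p.succAbove ei' = e i := fun i => Fin.exists_succAbove_eq (hp i)
    choose e' he' using hex
    have he'mono : StrictMono e' := fun a b hab =>
      (Fin.succAbove_lt_succAbove_iff (p := p)).1 (by rw [he' a, he' b]; exact he hab)
    have hcomp : y ∘ e = (fun q => y (p.succAbove q)) ∘ e' := funext fun i => by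
      simp only [Function.comp_apply, he' i]
    have hz : y p ∈ Ideal.span (Set.range (fun q => y (p.succAbove q))) := by
      refine Ideal.span_mono ?_ (hsp p hp)
      rw [hcomp]
      exact Set.range_comp_subset_range e' fun q => y (p.succAbove q)
    refine le_trans (kgrSeq_le_comp_succAbove p y hz) ?_
    rw [hcomp]
    refine ih (fun q => y (p.succAbove q)) e' he'mono ?_
    intro q hq
    have hqe : ∀ i, e i ≠ p.succAbove q := by
      intro i hi
      exact hq i (Fin.succAbove_right_injective (by rw [he' i, hi]))
    have := hsp (p.succAbove q) (fun i hi => hqe i hi)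
    rwa [hcomp] at this

lemma kgrSeq_comp_le {m n' : ℕ} (hmn : m ≤ n') (e : Fin m → Fin n') (he : StrictMono e)
    (y : Fin n' → A) : kgrSeq A M (y ∘ e) ≤ kgrSeq A M y := by
  obtain ⟨k, rfl⟩ : ∃ k, n' = m + k := ⟨n' - m, by omega⟩
  exact comp_le_aux k y e he

lemma kgrSeq_comp_ge {m n' : ℕ} (hmn : m ≤ n') (e : Fin m → Fin n') (he : StrictMono e)
    (y : Fin n' → A)
    (hsp : ∀ q, (∀ i, e i ≠ q) → y q ∈ Ideal.span (Set.range (y ∘ e))) :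
    kgrSeq A M y ≤ kgrSeq A M (y ∘ e) := by
  obtain ⟨k, rfl⟩ : ∃ k, n' = m + k := ⟨n' - m, by omega⟩
  exact comp_ge_aux k y e he hsp

/-- The Koszul grade of a finitely generated ideal is computed by any finite
generating sequence. -/
lemma kgr_span_range_eq {ℓ : ℕ} (g : Fin ℓ → A) :
    kgr A (Ideal.span (Set.range g)) M = kgrSeq A M g := by
  apply le_antisymm
  · refine iSup_le fun m => iSup_le fun y => iSup_le fun hy => ?_
    -- y : Fin m → A with entries in span(range g)
    have h1 : kgrSeq A M y ≤ kgrSeq A M (Fin.append y g) := by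
      have hyy : y = Fin.append y g ∘ Fin.castAdd ℓ := funext fun i =>
        (Fin.append_left y g i).symm
      conv_lhs => rw [hyy]
      exact kgrSeq_comp_le (by omega) _ (Fin.strictMono_castAdd ℓ) _
    have hg : g = Fin.append y g ∘ Fin.natAdd m := funext fun i =>
      (Fin.append_right y g i).symm
    have h2 : kgrSeq A M (Fin.append y g) ≤ kgrSeq A M g := by
      rw [show kgrSeq A M g = kgrSeq A M (Fin.append y g ∘ Fin.natAdd m) by rw [← hg]]
      refine kgrSeq_comp_ge (by omega) _ (Fin.strictMono_natAdd m) _ ?_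
      intro q hq
      rw [← hg]
      -- q not in range natAdd: q.1 < m
      have hqm : (q : ℕ) < m := by
        by_contra hge
        exact hq ⟨(q : ℕ) - m, by omega⟩ (by ext; simp; omega)
      have hcast : Fin.castAdd ℓ ⟨(q : ℕ), hqm⟩ = q := by ext; rfl
      have happ : Fin.append y g q = y ⟨(q : ℕ), hqm⟩ := by
        conv_lhs => rw [← hcast]
        exact Fin.append_left y g _
      rw [happ]
      exact hy _
    exact le_trans h1 h2
  · refine le_iSup_of_le ℓ (le_iSup_of_le g (le_iSup_of_le ?_ le_rfl))
    exact fun j => Ideal.subset_span ⟨j, rfl⟩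

end KoszulAux
namespace KoszulAux
open Finset
set_option linter.unusedSectionVars false

section CompHom
variable {A B' : Type*} [CommRing A] [CommRing B'] (φ : A →+* B')
  (N : Type*) [AddCommGroup N] [Module B' N] {n : ℕ}

lemma koszulMap_compHom_eq (x : Fin n → A) (i : ℕ)
    (g : {s : Finset (Fin n) // s.card = i} → N) :
    @koszulMap A _ N _ (Module.compHom N φ) n x i g
      = koszulMap B' N (φ ∘ x) i g := by
  letI : Module A N := Module.compHom N φ
  funext t
  rw [@koszulMap_apply A _ N _ (Module.compHom N φ) n, koszulMap_apply]
  refine Finset.sum_congr rfl fun j hj => ?_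
  rw [kTerm, kTerm, dif_pos hj, dif_pos hj]
  show φ ((-1 : A) ^ cnt t.1 j * x j) • g ⟨t.1.erase j, by
      rw [Finset.card_erase_of_mem hj, t.2]; omega⟩
    = ((-1 : B') ^ cnt t.1 j * (⇑φ ∘ x) j) • g ⟨t.1.erase j, by
      rw [Finset.card_erase_of_mem hj, t.2]; omega⟩
  rw [map_mul, map_pow, map_neg, map_one]
  rfl

lemma kCNZ_compHom (x : Fin n → A) (k : ℕ) :
    @koszulCohomologyNeZero A _ N _ (Module.compHom N φ) n x k
      ↔ koszulCohomologyNeZero B' N (φ ∘ x) k := by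
  letI : Module A N := Module.compHom N φ
  cases k with
  | zero =>
    show _ ≠ ⊥ ↔ _ ≠ ⊥
    rw [Submodule.ne_bot_iff, Submodule.ne_bot_iff]
    refine exists_congr fun g => and_congr ?_ Iff.rfl
    rw [LinearMap.mem_ker, LinearMap.mem_ker, koszulMap_compHom_eq]
  | succ k =>
    show ¬ _ ↔ ¬ _
    refine not_congr ?_
    constructor
    · intro h g hg
      rw [LinearMap.mem_ker, ← koszulMap_compHom_eq] at hg
      obtain ⟨u, hu⟩ := LinearMap.mem_range.1 (h (LinearMap.mem_ker.2 hg))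
      exact LinearMap.mem_range.2 ⟨u, by rw [← koszulMap_compHom_eq]; exact hu⟩
    · intro h g hg
      rw [LinearMap.mem_ker, koszulMap_compHom_eq] at hg
      obtain ⟨u, hu⟩ := LinearMap.mem_range.1 (h (LinearMap.mem_ker.2 hg))
      exact LinearMap.mem_range.2 ⟨u, by rw [koszulMap_compHom_eq]; exact hu⟩

lemma kgrSeq_compHom (x : Fin n → A) :
    @kgrSeq A _ N _ (Module.compHom N φ) n x = kgrSeq B' N (φ ∘ x) := by
  letI : Module A N := Module.compHom N φ
  unfold kgrSeq
  congr 1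
  ext i
  exact exists_congr fun k => and_congr Iff.rfl (kCNZ_compHom φ N x k)

end CompHom

section Equiv
variable {A : Type*} [CommRing A] {M N : Type*} [AddCommGroup M] [Module A M]
  [AddCommGroup N] [Module A N] {n : ℕ}

lemma koszulMap_comp_equiv (e : M ≃ₗ[A] N) (x : Fin n → A) (i : ℕ)
    (g : {s : Finset (Fin n) // s.card = i} → M) :
    koszulMap A N x i (fun s => e (g s)) = fun t => e (koszulMap A M x i g t) := by
  funext t
  rw [koszulMap_apply, koszulMap_apply, map_sum]
  refine Finset.sum_congr rfl fun j hj => ?_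
  rw [kTerm, kTerm, dif_pos hj, dif_pos hj, map_smul]

lemma kCNZ_equiv (e : M ≃ₗ[A] N) (x : Fin n → A) (k : ℕ)
    (hk : koszulCohomologyNeZero A M x k) : koszulCohomologyNeZero A N x k := by
  cases k with
  | zero =>
    obtain ⟨g, hg, hg0⟩ := (Submodule.ne_bot_iff _).1 hk
    rw [LinearMap.mem_ker] at hg
    refine (Submodule.ne_bot_iff _).2 ⟨fun s => e (g s), LinearMap.mem_ker.2 ?_, ?_⟩
    · rw [koszulMap_comp_equiv, hg]
      funext t; exact map_zero e
    · intro hcon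
      refine hg0 (funext fun s => ?_)
      have : e (g s) = 0 := congrFun hcon s
      simpa using (e.injective (by simpa using this))
  | succ k =>
    intro hle
    refine hk ?_
    intro g hg
    rw [LinearMap.mem_ker] at hg
    have h1 : koszulMap A N x (k+1) (fun s => e (g s)) = 0 := by
      rw [koszulMap_comp_equiv, hg]; funext t; exact map_zero e
    obtain ⟨u, hu⟩ := LinearMap.mem_range.1 (hle (LinearMap.mem_ker.2 h1))
    refine LinearMap.mem_range.2 ⟨fun s => e.symm (u s), ?_⟩
    have h2 := koszulMap_comp_equiv e.symm x k u
    rw [h2]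
    funext t
    have := congrFun hu t
    show e.symm _ = _
    rw [this]
    simp

lemma kgrSeq_equiv (e : M ≃ₗ[A] N) (x : Fin n → A) :
    kgrSeq A M x = kgrSeq A N x := by
  unfold kgrSeq
  congr 1
  ext i
  exact exists_congr fun k => and_congr Iff.rfl
    ⟨kCNZ_equiv e x k, kCNZ_equiv e.symm x k⟩

end Equiv

section Prod
variable {A : Type*} [CommRing A] {M N : Type*} [AddCommGroup M] [Module A M]
  [AddCommGroup N] [Module A N] {n : ℕ}

lemma koszulMap_fst (x : Fin n → A) (i : ℕ)
    (g : {s : Finset (Fin n) // s.card = i} → M × N) (t) :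
    (koszulMap A (M × N) x i g t).1 = koszulMap A M x i (fun s => (g s).1) t := by
  rw [koszulMap_apply, koszulMap_apply, Prod.fst_sum]
  refine Finset.sum_congr rfl fun j hj => ?_
  rw [kTerm, kTerm, dif_pos hj, dif_pos hj, Prod.smul_fst]

lemma koszulMap_snd (x : Fin n → A) (i : ℕ)
    (g : {s : Finset (Fin n) // s.card = i} → M × N) (t) :
    (koszulMap A (M × N) x i g t).2 = koszulMap A N x i (fun s => (g s).2) t := by
  rw [koszulMap_apply, koszulMap_apply, Prod.snd_sum]
  refine Finset.sum_congr rfl fun j hj => ?_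
  rw [kTerm, kTerm, dif_pos hj, dif_pos hj, Prod.smul_snd]

lemma kCNZ_prod (x : Fin n → A) (k : ℕ) :
    koszulCohomologyNeZero A (M × N) x k
      ↔ koszulCohomologyNeZero A M x k ∨ koszulCohomologyNeZero A N x k := by
  cases k with
  | zero =>
    show _ ≠ ⊥ ↔ _ ≠ ⊥ ∨ _ ≠ ⊥
    rw [Submodule.ne_bot_iff, Submodule.ne_bot_iff, Submodule.ne_bot_iff]
    constructor
    · rintro ⟨g, hg, hg0⟩
      rw [LinearMap.mem_ker] at hg
      by_cases h1 : (fun s => (g s).1) = (0 : {s : Finset (Fin n) // s.card = 0} → M)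
      · refine Or.inr ⟨fun s => (g s).2, LinearMap.mem_ker.2 ?_, ?_⟩
        · funext t
          rw [← koszulMap_snd, hg]; rfl
        · intro hcon
          exact hg0 (funext fun s => Prod.ext (congrFun h1 s) (congrFun hcon s))
      · refine Or.inl ⟨fun s => (g s).1, LinearMap.mem_ker.2 ?_, h1⟩
        funext t
        rw [← koszulMap_fst, hg]; rfl
    · rintro (⟨g, hg, hg0⟩ | ⟨g, hg, hg0⟩)
      · rw [LinearMap.mem_ker] at hg
        refine ⟨fun s => (g s, 0), LinearMap.mem_ker.2 ?_, ?_⟩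
        · funext t
          refine Prod.ext ?_ ?_
          · rw [koszulMap_fst, hg]; rfl
          · rw [koszulMap_snd]
            show koszulMap A N x 0 0 t = (0 : M × N).2
            rw [map_zero]; rfl
        · intro hcon
          exact hg0 (funext fun s => congrArg Prod.fst (congrFun hcon s))
      · rw [LinearMap.mem_ker] at hg
        refine ⟨fun s => (0, g s), LinearMap.mem_ker.2 ?_, ?_⟩
        · funext t
          refine Prod.ext ?_ ?_
          · rw [koszulMap_fst]
            show koszulMap A M x 0 0 t = (0 : M × N).1
            rw [map_zero]; rfl
          · rw [koszulMap_snd, hg]; rfl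
        · intro hcon
          exact hg0 (funext fun s => congrArg Prod.snd (congrFun hcon s))
  | succ k =>
    show ¬ _ ↔ ¬ _ ∨ ¬ _
    rw [← not_and_or, not_iff_not]
    constructor
    · intro h
      constructor
      · intro g hg
        rw [LinearMap.mem_ker] at hg
        have h1 : koszulMap A (M × N) x (k+1) (fun s => (g s, 0)) = 0 := by
          funext t
          refine Prod.ext ?_ ?_
          · rw [koszulMap_fst, hg]; rfl
          · rw [koszulMap_snd]
            show koszulMap A N x (k+1) 0 t = (0 : M × N).2
            rw [map_zero]; rfl
        obtain ⟨u, hu⟩ := LinearMap.mem_range.1 (h (LinearMap.mem_ker.2 h1))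
        refine LinearMap.mem_range.2 ⟨fun s => (u s).1, ?_⟩
        funext t
        rw [← koszulMap_fst]
        exact congrArg Prod.fst (congrFun hu t)
      · intro g hg
        rw [LinearMap.mem_ker] at hg
        have h1 : koszulMap A (M × N) x (k+1) (fun s => (0, g s)) = 0 := by
          funext t
          refine Prod.ext ?_ ?_
          · rw [koszulMap_fst]
            show koszulMap A M x (k+1) 0 t = (0 : M × N).1
            rw [map_zero]; rfl
          · rw [koszulMap_snd, hg]; rfl
        obtain ⟨u, hu⟩ := LinearMap.mem_range.1 (h (LinearMap.mem_ker.2 h1))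
        refine LinearMap.mem_range.2 ⟨fun s => (u s).2, ?_⟩
        funext t
        rw [← koszulMap_snd]
        exact congrArg Prod.snd (congrFun hu t)
    · rintro ⟨hM, hN⟩ g hg
      rw [LinearMap.mem_ker] at hg
      have hg1 : koszulMap A M x (k+1) (fun s => (g s).1) = 0 := by
        funext t; rw [← koszulMap_fst, hg]; rfl
      have hg2 : koszulMap A N x (k+1) (fun s => (g s).2) = 0 := by
        funext t; rw [← koszulMap_snd, hg]; rfl
      obtain ⟨u1, hu1⟩ := LinearMap.mem_range.1 (hM (LinearMap.mem_ker.2 hg1))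
      obtain ⟨u2, hu2⟩ := LinearMap.mem_range.1 (hN (LinearMap.mem_ker.2 hg2))
      refine LinearMap.mem_range.2 ⟨fun s => (u1 s, u2 s), ?_⟩
      funext t
      refine Prod.ext ?_ ?_
      · rw [koszulMap_fst]
        exact congrFun hu1 t
      · rw [koszulMap_snd]
        exact congrFun hu2 t

lemma kgrSeq_prod (x : Fin n → A) :
    kgrSeq A (M × N) x = min (kgrSeq A M x) (kgrSeq A N x) := by
  unfold kgrSeq
  rw [← sInf_union]
  congr 1
  ext i
  constructor
  · rintro ⟨k, rfl, hk⟩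
    rcases (kCNZ_prod x k).1 hk with h | h
    · exact Or.inl ⟨k, rfl, h⟩
    · exact Or.inr ⟨k, rfl, h⟩
  · rintro (⟨k, rfl, hk⟩ | ⟨k, rfl, hk⟩)
    · exact ⟨k, rfl, (kCNZ_prod x k).2 (Or.inl hk)⟩
    · exact ⟨k, rfl, (kCNZ_prod x k).2 (Or.inr hk)⟩

end Prod
end KoszulAux
namespace KoszulAux
set_option linter.unusedSectionVars false

section Amalg
variable {A B : Type*} [CommRing A] [CommRing B] (f : A →+* B) (J : Ideal B)

lemma kgrSeq_amalg {ℓ : ℕ} (g : Fin ℓ → A) :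
    kgrSeq ↥(amalgamation f J) ↥(amalgamation f J) (⇑(amalgIota f J) ∘ g)
      = min (kgrSeq A A g) (@kgrSeq A _ ↥J _ (Module.compHom J f) ℓ g) := by
  letI instJ : Module A ↥J := Module.compHom J f
  rw [← kgrSeq_compHom (amalgIota f J) ↥(amalgamation f J) g]
  letI instR : Module A ↥(amalgamation f J) := Module.compHom _ (amalgIota f J)
  have e : (↥(amalgamation f J)) ≃ₗ[A] (A × ↥J) :=
    { toFun := fun r => (r.1.1, ⟨r.1.2 - f r.1.1, r.2⟩)
      map_add' := fun r s => by
        refine Prod.ext rfl (Subtype.ext ?_)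
        show (r.1.2 + s.1.2) - f (r.1.1 + s.1.1)
          = (r.1.2 - f r.1.1) + (s.1.2 - f s.1.1)
        rw [map_add]; ring
      map_smul' := fun a r => by
        refine Prod.ext rfl (Subtype.ext ?_)
        show (f a * r.1.2) - f (a * r.1.1) = f a * (r.1.2 - f r.1.1)
        rw [map_mul]; ring
      invFun := fun z => ⟨(z.1, f z.1 + z.2.1), by
        show (f z.1 + z.2.1) - f z.1 ∈ J
        simp only [add_sub_cancel_left]; exact z.2.2⟩
      left_inv := fun r => by
        refine Subtype.ext (Prod.ext rfl ?_)
        show f r.1.1 + (r.1.2 - f r.1.1) = r.1.2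
        ring
      right_inv := fun z => by
        refine Prod.ext rfl (Subtype.ext ?_)
        show (f z.1 + z.2.1) - f z.1 = z.2.1
        ring }
  rw [kgrSeq_equiv e g, kgrSeq_prod g]

end Amalg
end KoszulAux

/-- For every finitely generated ideal `𝔟` of `A`,
`kgr_{A⋈^f J}(𝔟^e, A⋈^f J) = min { kgr_A(𝔟, A), kgr_A(𝔟, J) }`. -/
theorem kgr_ext_eq_min_of_fg {A B : Type*} [CommRing A] [CommRing B] (f : A →+* B)
    (J : Ideal B) (𝔟 : Ideal A) (hfg : 𝔟.FG) :
    kgr ↥(amalgamation f J) (idealExt f J 𝔟) ↥(amalgamation f J) =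
      min (kgr A 𝔟 A) (kgrIdeal f J 𝔟) := by
  obtain ⟨s, hs⟩ := hfg
  set ℓ := s.card with hl
  set g : Fin ℓ → A := fun i => ((s.equivFin.symm i : A)) with hgdef
  have hrange : Set.range g = ↑s := by
    ext a
    constructor
    · rintro ⟨i, rfl⟩
      exact (s.equivFin.symm i).2
    · intro ha
      exact ⟨s.equivFin ⟨a, ha⟩, by rw [hgdef]; simp⟩
  have hspan : Ideal.span (Set.range g) = 𝔟 := by rw [hrange, hs]
  have hext : idealExt f J 𝔟 = Ideal.span (Set.range (⇑(amalgIota f J) ∘ g)) := by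
    rw [idealExt, ← hspan, Ideal.map_span, Set.range_comp]
  have h1 : kgr ↥(amalgamation f J) (idealExt f J 𝔟) ↥(amalgamation f J)
      = kgrSeq ↥(amalgamation f J) ↥(amalgamation f J) (⇑(amalgIota f J) ∘ g) := by
    rw [hext]
    exact KoszulAux.kgr_span_range_eq _
  have h2 : kgr A 𝔟 A = kgrSeq A A g := by
    rw [← hspan]
    exact KoszulAux.kgr_span_range_eq _
  have h3 : kgrIdeal f J 𝔟 = @kgrSeq A _ ↥J _ (Module.compHom J f) ℓ g := by
    show @kgr A _ 𝔟 ↥J _ (Module.compHom J f) = _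
    rw [← hspan]
    exact @KoszulAux.kgr_span_range_eq A _ ↥J _ (Module.compHom J f) ℓ g
  rw [h1, h2, h3, KoszulAux.kgrSeq_amalg f J g]
end

section
/- Let A and B be commutative rings with unity, f : A → B a ring homomorphism, and J an ideal of B. For every ideal 𝔞 of A, one has the inequality kgr_{A⋈^f J}(𝔞^e, A⋈^f J) ≤ min{ kgr_A(𝔞, A), kgr_A(𝔞, J) }, where 𝔞^e = 𝔞(A⋈^f J). -/
section KoszulInfra

variable {A : Type*} [CommRing A] {M : Type*} [AddCommGroup M] [Module A M]

/-- Total-function extension of a cochain by zero. -/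
noncomputable def gbar {n i : ℕ} (g : {s : Finset (Fin n) // s.card = i} → M) :
    Finset (Fin n) → M :=
  fun s => if h : s.card = i then g ⟨s, h⟩ else 0

lemma gbar_of_card {n i : ℕ} (g : {s : Finset (Fin n) // s.card = i} → M)
    (s : Finset (Fin n)) (hs : s.card = i) : gbar g s = g ⟨s, hs⟩ := dif_pos hs

lemma gbar_zero {n i : ℕ} : gbar (0 : {s : Finset (Fin n) // s.card = i} → M) = 0 := by
  funext s; simp [gbar]

lemma koszulMap_apply_eq {n : ℕ} (x : Fin n → A) (i : ℕ)
    (g : {s : Finset (Fin n) // s.card = i} → M) (t : Finset (Fin n))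
    (ht : t.card = i + 1) :
    koszulMap A M x i g ⟨t, ht⟩ =
      ∑ j ∈ t, (((-1 : A) ^ ((t.filter (· < j)).card)) * x j) • gbar g (t.erase j) := by
  show (∑ j ∈ t.attach, _) = _
  rw [← Finset.sum_attach t
    (fun j => (((-1 : A) ^ ((t.filter (· < j)).card)) * x j) • gbar g (t.erase j))]
  refine Finset.sum_congr rfl fun j _ => ?_
  rw [gbar_of_card g _ (by rw [Finset.card_erase_of_mem j.2, ht]; omega)]

/-- Vanishing of the `k`-th Koszul cohomology, in elementwise form. -/
def kvan (A : Type*) [CommRing A] (M : Type*) [AddCommGroup M] [Module A M]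
    {n : ℕ} (x : Fin n → A) : ℕ → Prop
  | 0 => ∀ g, koszulMap A M x 0 g = 0 → g = 0
  | (i + 1) => ∀ g, koszulMap A M x (i + 1) g = 0 → ∃ h, koszulMap A M x i h = g

lemma not_koszulCohomologyNeZero_iff {n : ℕ} (x : Fin n → A) (k : ℕ) :
    ¬ koszulCohomologyNeZero A M x k ↔ kvan A M x k := by
  cases k with
  | zero =>
    rw [koszulCohomologyNeZero, kvan, not_not]
    constructor
    · intro h g hg
      have : g ∈ LinearMap.ker (koszulMap A M x 0) := hg
      rw [h] at this; simpa using this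
    · intro h
      ext g
      simp only [LinearMap.mem_ker, Submodule.mem_bot]
      exact ⟨fun hg => h g hg, fun hg => by rw [hg]; simp⟩
  | succ i =>
    rw [koszulCohomologyNeZero, kvan, not_not]
    constructor
    · intro h g hg
      exact h (show g ∈ LinearMap.ker _ from hg)
    · intro h g hg
      exact h g hg

lemma kgrSeq_le_kgrSeq {A' : Type*} [CommRing A'] {M' : Type*} [AddCommGroup M']
    [Module A' M'] {n n' : ℕ} {x : Fin n → A} {x' : Fin n' → A'}
    (h : ∀ k : ℕ, (∀ j ≤ k, kvan A M x j) → kvan A' M' x' k) :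
    kgrSeq A M x ≤ kgrSeq A' M' x' := by
  apply sInf_le_sInf_of_isCoinitialFor
  rintro i ⟨k, rfl, hk⟩
  by_contra hc
  push_neg at hc
  have hvan : ∀ j ≤ k, kvan A M x j := by
    intro j hj
    by_contra hj'
    have hNZ : koszulCohomologyNeZero A M x j := by
      by_contra h2
      exact hj' ((not_koszulCohomologyNeZero_iff x j).mp h2)
    exact absurd (hc _ ⟨j, rfl, hNZ⟩) (not_lt.mpr (by exact_mod_cast hj))
  exact (not_koszulCohomologyNeZero_iff x' k).mpr (h k hvan) hk

end KoszulInfra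

lemma koszulCohomologyNeZero_iff_not_kvan {A : Type*} [CommRing A] {M : Type*}
    [AddCommGroup M] [Module A M] {n : ℕ} (x : Fin n → A) (k : ℕ) :
    koszulCohomologyNeZero A M x k ↔ ¬ kvan A M x k :=
  not_not.symm.trans (not_congr (not_koszulCohomologyNeZero_iff x k))
section Transport

variable {A : Type*} [CommRing A] {M : Type*} [AddCommGroup M] [Module A M]

lemma kgrSeq_congr {A' : Type*} [CommRing A'] {M' : Type*} [AddCommGroup M']
    [Module A' M'] {n n' : ℕ} {x : Fin n → A} {x' : Fin n' → A'}
    (h : ∀ k, kvan A M x k ↔ kvan A' M' x' k) :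
    kgrSeq A M x = kgrSeq A' M' x' := by
  unfold kgrSeq
  congr 1
  ext i
  refine exists_congr fun k => and_congr_right fun _ => ?_
  exact (koszulCohomologyNeZero_iff_not_kvan x k).trans
    ((not_congr (h k)).trans (koszulCohomologyNeZero_iff_not_kvan x' k).symm)

/-! ### Restriction of scalars -/

lemma koszulMap_compHom {R : Type*} [CommRing R] (φ : A →+* R) [Module R M]
    (hsmul : ∀ (a : A) (m : M), a • m = φ a • m) {n : ℕ} (x : Fin n → A) (i : ℕ)
    (g : {s : Finset (Fin n) // s.card = i} → M) :
    koszulMap A M x i g = koszulMap R M (φ ∘ x) i g := by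
  funext t
  obtain ⟨t, ht⟩ := t
  rw [koszulMap_apply_eq, koszulMap_apply_eq]
  refine Finset.sum_congr rfl fun j _ => ?_
  rw [hsmul]
  congr 1
  rw [map_mul, map_pow, map_neg, map_one]
  rfl

lemma kgrSeq_compHom {R : Type*} [CommRing R] (φ : A →+* R) [Module R M]
    (hsmul : ∀ (a : A) (m : M), a • m = φ a • m) {n : ℕ} (x : Fin n → A) :
    kgrSeq A M x = kgrSeq R M (φ ∘ x) := by
  refine kgrSeq_congr fun k => ?_
  cases k with
  | zero =>
    constructor <;> intro h g hg
    · exact h g (by rw [koszulMap_compHom φ hsmul]; exact hg)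
    · exact h g (by rw [← koszulMap_compHom φ hsmul]; exact hg)
  | succ i =>
    constructor <;> intro h g hg
    · obtain ⟨w, hw⟩ := h g (by rw [koszulMap_compHom φ hsmul]; exact hg)
      exact ⟨w, by rw [← koszulMap_compHom φ hsmul]; exact hw⟩
    · obtain ⟨w, hw⟩ := h g (by rw [← koszulMap_compHom φ hsmul]; exact hg)
      exact ⟨w, by rw [koszulMap_compHom φ hsmul]; exact hw⟩

/-! ### Invariance under linear equivalence -/

lemma koszulMap_equiv_comm {N : Type*} [AddCommGroup N] [Module A N] (e : M ≃ₗ[A] N)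
    {n : ℕ} (x : Fin n → A) (i : ℕ) (g : {s : Finset (Fin n) // s.card = i} → M) :
    koszulMap A N x i (fun s => e (g s)) = fun t => e (koszulMap A M x i g t) := by
  funext t
  obtain ⟨t, ht⟩ := t
  rw [koszulMap_apply_eq, koszulMap_apply_eq, map_sum]
  refine Finset.sum_congr rfl fun j _ => ?_
  rw [map_smul]
  congr 1
  by_cases h : (t.erase j).card = i
  · rw [gbar_of_card _ _ h, gbar_of_card _ _ h]
  · simp [gbar, h]

lemma kvan_of_equiv {N : Type*} [AddCommGroup N] [Module A N] (e : M ≃ₗ[A] N)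
    {n : ℕ} (x : Fin n → A) (k : ℕ) (h : kvan A M x k) : kvan A N x k := by
  cases k with
  | zero =>
    intro g hg
    have hc : koszulMap A M x 0 (fun s => e.symm (g s)) = 0 := by
      rw [koszulMap_equiv_comm e.symm x 0 g, hg]
      funext t; simp
    have h0 := h _ hc
    funext s
    have := congrFun h0 s
    simp only [Pi.zero_apply] at this ⊢
    rw [← e.apply_symm_apply (g s), this, map_zero]
  | succ i =>
    intro g hg
    have hc : koszulMap A M x (i+1) (fun s => e.symm (g s)) = 0 := by
      rw [koszulMap_equiv_comm e.symm x (i+1) g, hg]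
      funext t; simp
    obtain ⟨w, hw⟩ := h _ hc
    refine ⟨fun s => e (w s), ?_⟩
    rw [koszulMap_equiv_comm e x i w]
    funext t
    rw [hw]
    simp

lemma kgrSeq_equiv {N : Type*} [AddCommGroup N] [Module A N] (e : M ≃ₗ[A] N)
    {n : ℕ} (x : Fin n → A) : kgrSeq A M x = kgrSeq A N x :=
  kgrSeq_congr fun k => ⟨kvan_of_equiv e x k, kvan_of_equiv e.symm x k⟩

/-! ### Product splitting -/

variable {N : Type*} [AddCommGroup N] [Module A N]

lemma koszulMap_prod {n : ℕ} (x : Fin n → A) (i : ℕ)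
    (g : {s : Finset (Fin n) // s.card = i} → M × N) :
    koszulMap A (M × N) x i g = fun t =>
      (koszulMap A M x i (fun s => (g s).1) t, koszulMap A N x i (fun s => (g s).2) t) := by
  funext t
  obtain ⟨t, ht⟩ := t
  rw [koszulMap_apply_eq]
  have h1 : ∀ s : Finset (Fin n),
      gbar g s = (gbar (fun s => (g s).1) s, gbar (fun s => (g s).2) s) := by
    intro s
    by_cases h : s.card = i
    · rw [gbar_of_card _ _ h, gbar_of_card _ _ h, gbar_of_card _ _ h]
    · simp [gbar, h, Prod.ext_iff]
  refine Prod.ext ?_ ?_ <;>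
    · simp only [koszulMap_apply_eq, Prod.fst_sum, Prod.snd_sum]
      refine Finset.sum_congr rfl fun j _ => ?_
      rw [h1]
      rfl

lemma koszulMap_pair_left {n : ℕ} (x : Fin n → A) (k : ℕ)
    {g : {s : Finset (Fin n) // s.card = k} → M} (hg : koszulMap A M x k g = 0) :
    koszulMap A (M × N) x k (fun s => (g s, (0 : N))) = 0 := by
  rw [koszulMap_prod]
  have e1 : koszulMap A M x k (fun s => ((fun s => (g s, (0:N))) s).1) = 0 := hg
  have e2 : koszulMap A N x k (fun s => ((fun s => (g s, (0:N))) s).2) = 0 := map_zero _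
  rw [e1, e2]
  rfl

lemma koszulMap_pair_right {n : ℕ} (x : Fin n → A) (k : ℕ)
    {g : {s : Finset (Fin n) // s.card = k} → N} (hg : koszulMap A N x k g = 0) :
    koszulMap A (M × N) x k (fun s => ((0 : M), g s)) = 0 := by
  rw [koszulMap_prod]
  have e1 : koszulMap A M x k (fun s => ((fun s => ((0:M), g s)) s).1) = 0 := map_zero _
  have e2 : koszulMap A N x k (fun s => ((fun s => ((0:M), g s)) s).2) = 0 := hg
  rw [e1, e2]
  rfl

lemma kvan_prod_iff {n : ℕ} (x : Fin n → A) (k : ℕ) :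
    kvan A (M × N) x k ↔ kvan A M x k ∧ kvan A N x k := by
  cases k with
  | zero =>
    constructor
    · intro h
      constructor
      · intro g hg
        have h0 := h _ (koszulMap_pair_left (N := N) x 0 hg)
        funext s
        exact congrArg Prod.fst (congrFun h0 s)
      · intro g hg
        have h0 := h _ (koszulMap_pair_right (M := M) x 0 hg)
        funext s
        exact congrArg Prod.snd (congrFun h0 s)
    · rintro ⟨hM, hN⟩ g hg
      rw [koszulMap_prod] at hg
      have h1 : koszulMap A M x 0 (fun s => (g s).1) = 0 := by
        funext t; exact congrArg Prod.fst (congrFun hg t)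
      have h2 : koszulMap A N x 0 (fun s => (g s).2) = 0 := by
        funext t; exact congrArg Prod.snd (congrFun hg t)
      have e1 := hM _ h1
      have e2 := hN _ h2
      funext s
      exact Prod.ext (congrFun e1 s) (congrFun e2 s)
  | succ i =>
    constructor
    · intro h
      constructor
      · intro g hg
        obtain ⟨w, hw⟩ := h _ (koszulMap_pair_left (N := N) x (i+1) hg)
        rw [koszulMap_prod] at hw
        refine ⟨fun s => (w s).1, funext fun t => ?_⟩
        exact congrArg Prod.fst (congrFun hw t)
      · intro g hg
        obtain ⟨w, hw⟩ := h _ (koszulMap_pair_right (M := M) x (i+1) hg)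
        rw [koszulMap_prod] at hw
        refine ⟨fun s => (w s).2, funext fun t => ?_⟩
        exact congrArg Prod.snd (congrFun hw t)
    · rintro ⟨hM, hN⟩ g hg
      rw [koszulMap_prod] at hg
      have h1 : koszulMap A M x (i+1) (fun s => (g s).1) = 0 := by
        funext t; exact congrArg Prod.fst (congrFun hg t)
      have h2 : koszulMap A N x (i+1) (fun s => (g s).2) = 0 := by
        funext t; exact congrArg Prod.snd (congrFun hg t)
      obtain ⟨w1, hw1⟩ := hM _ h1
      obtain ⟨w2, hw2⟩ := hN _ h2
      refine ⟨fun s => (w1 s, w2 s), ?_⟩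
      rw [koszulMap_prod]
      funext t
      exact Prod.ext (congrFun hw1 t) (congrFun hw2 t)

lemma kgrSeq_prod {n : ℕ} (x : Fin n → A) :
    kgrSeq A (M × N) x = min (kgrSeq A M x) (kgrSeq A N x) := by
  unfold kgrSeq
  rw [← sInf_union]
  congr 1
  ext i
  simp only [Set.mem_setOf_eq, Set.mem_union]
  constructor
  · rintro ⟨k, rfl, hk⟩
    rw [koszulCohomologyNeZero_iff_not_kvan, kvan_prod_iff, not_and_or] at hk
    rcases hk with hk | hk
    · exact Or.inl ⟨k, rfl, (koszulCohomologyNeZero_iff_not_kvan x k).mpr hk⟩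
    · exact Or.inr ⟨k, rfl, (koszulCohomologyNeZero_iff_not_kvan x k).mpr hk⟩
  · rintro (⟨k, rfl, hk⟩ | ⟨k, rfl, hk⟩) <;>
      refine ⟨k, rfl, ?_⟩ <;>
      rw [koszulCohomologyNeZero_iff_not_kvan, kvan_prod_iff, not_and_or]
    · exact Or.inl ((koszulCohomologyNeZero_iff_not_kvan x k).mp hk)
    · exact Or.inr ((koszulCohomologyNeZero_iff_not_kvan x k).mp hk)

end Transport
section ConsMachinery

set_option linter.unusedSectionVars false

variable {A : Type*} [CommRing A] {M : Type*} [AddCommGroup M] [Module A M]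

/-- Preimage of a finset of `Fin (n+1)` under `Fin.succ`. -/
def preSucc {n : ℕ} (t : Finset (Fin (n + 1))) : Finset (Fin n) :=
  (t.subtype (· ≠ 0)).map
    ⟨fun j => j.1.pred j.2, fun a b hab => Subtype.ext (by
      have := congrArg Fin.succ hab
      rwa [Fin.succ_pred, Fin.succ_pred] at this)⟩

lemma mem_preSucc {n : ℕ} {t : Finset (Fin (n + 1))} {k : Fin n} :
    k ∈ preSucc t ↔ k.succ ∈ t := by
  simp only [preSucc, Finset.mem_map, Finset.mem_subtype, Function.Embedding.coeFn_mk]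
  constructor
  · rintro ⟨⟨j, hj0⟩, hjt, rfl⟩
    show (j.pred hj0).succ ∈ t
    rwa [Fin.succ_pred]
  · intro hk
    exact ⟨⟨k.succ, Fin.succ_ne_zero k⟩, hk, @Fin.pred_succ n k (Fin.succ_ne_zero k)⟩

lemma preSucc_map {n : ℕ} (s : Finset (Fin n)) :
    preSucc (s.map (Fin.succEmb n)) = s := by
  ext k
  rw [mem_preSucc]
  exact Finset.mem_map' _

lemma zero_not_mem_map_succ {n : ℕ} (s : Finset (Fin n)) :
    (0 : Fin (n+1)) ∉ s.map (Fin.succEmb n) := by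
  simp only [Finset.mem_map, Fin.coe_succEmb]
  rintro ⟨k, _, hk⟩
  exact Fin.succ_ne_zero k hk

lemma map_preSucc {n : ℕ} {t : Finset (Fin (n + 1))} (h : (0 : Fin (n+1)) ∉ t) :
    (preSucc t).map (Fin.succEmb n) = t := by
  ext j
  simp only [Finset.mem_map, Fin.coe_succEmb]
  constructor
  · rintro ⟨k, hk, rfl⟩
    exact mem_preSucc.mp hk
  · intro hj
    have hj0 : j ≠ 0 := fun hj0 => h (hj0 ▸ hj)
    exact ⟨j.pred hj0, mem_preSucc.mpr (by rwa [Fin.succ_pred]), Fin.succ_pred j hj0⟩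

lemma insert_map_preSucc {n : ℕ} {t : Finset (Fin (n + 1))} (h : (0 : Fin (n+1)) ∈ t) :
    insert 0 ((preSucc t).map (Fin.succEmb n)) = t := by
  ext j
  simp only [Finset.mem_insert, Finset.mem_map, Fin.coe_succEmb]
  constructor
  · rintro (rfl | ⟨k, hk, rfl⟩)
    · exact h
    · exact mem_preSucc.mp hk
  · intro hj
    by_cases hj0 : j = 0
    · exact Or.inl hj0
    · exact Or.inr ⟨j.pred hj0, mem_preSucc.mpr (by rwa [Fin.succ_pred]), Fin.succ_pred j hj0⟩

lemma preSucc_insert_zero {n : ℕ} (t : Finset (Fin (n + 1))) :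
    preSucc (insert 0 t) = preSucc t := by
  ext k
  rw [mem_preSucc, mem_preSucc, Finset.mem_insert]
  exact ⟨fun h => h.resolve_left (Fin.succ_ne_zero k), Or.inr⟩

/-- First component (sets avoiding `0`) of a cochain over `Fin (n+1)`. -/
def Kpi {n i : ℕ} (G : {s : Finset (Fin (n+1)) // s.card = i} → M) :
    {s : Finset (Fin n) // s.card = i} → M :=
  fun s => G ⟨s.1.map (Fin.succEmb n), by rw [Finset.card_map, s.2]⟩

/-- Second component (sets containing `0`) of a cochain over `Fin (n+1)`. -/
def Krho {n i : ℕ} (G : {s : Finset (Fin (n+1)) // s.card = i + 1} → M) :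
    {s : Finset (Fin n) // s.card = i} → M :=
  fun s => G ⟨insert 0 (s.1.map (Fin.succEmb n)),
    by rw [Finset.card_insert_of_notMem (zero_not_mem_map_succ s.1), Finset.card_map, s.2]⟩

/-- Assemble a cochain over `Fin (n+1)` from two total functions. -/
noncomputable def Ksig {n : ℕ} (i : ℕ) (gb hb : Finset (Fin n) → M) :
    {s : Finset (Fin (n+1)) // s.card = i} → M :=
  fun t => if (0 : Fin (n+1)) ∈ t.1 then hb (preSucc t.1) else gb (preSucc t.1)

lemma Kpi_Ksig {n i : ℕ} (gb hb : Finset (Fin n) → M) :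
    Kpi (Ksig (n := n) i gb hb) = fun s => gb s.1 := by
  funext s
  rw [Kpi, Ksig, if_neg (zero_not_mem_map_succ s.1), preSucc_map]

lemma Krho_Ksig {n i : ℕ} (gb hb : Finset (Fin n) → M) :
    Krho (Ksig (n := n) (i+1) gb hb) = fun s => hb s.1 := by
  funext s
  rw [Krho, Ksig, if_pos (Finset.mem_insert_self 0 _), preSucc_insert_zero, preSucc_map]

lemma Kext_succ {n i : ℕ} (G G' : {s : Finset (Fin (n+1)) // s.card = i + 1} → M)
    (h1 : Kpi G = Kpi G') (h2 : Krho G = Krho G') : G = G' := by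
  funext t
  obtain ⟨t, ht⟩ := t
  by_cases h0 : (0 : Fin (n+1)) ∈ t
  · have hc : (preSucc t).card = i := by
      have := ht
      rw [← insert_map_preSucc h0,
        Finset.card_insert_of_notMem (zero_not_mem_map_succ _), Finset.card_map] at this
      omega
    have e1 : (⟨t, ht⟩ : {s : Finset (Fin (n+1)) // s.card = i + 1}) =
        ⟨insert 0 ((preSucc t).map (Fin.succEmb n)), by
          rw [Finset.card_insert_of_notMem (zero_not_mem_map_succ _), Finset.card_map, hc]⟩ :=
      Subtype.ext (insert_map_preSucc h0).symm
    rw [e1]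
    exact (congrFun h2 ⟨preSucc t, hc⟩ : _)
  · have hc : (preSucc t).card = i + 1 := by
      rw [← Finset.card_map (Fin.succEmb n), map_preSucc h0, ht]
    have e1 : (⟨t, ht⟩ : {s : Finset (Fin (n+1)) // s.card = i + 1}) =
        ⟨(preSucc t).map (Fin.succEmb n), by rw [Finset.card_map, hc]⟩ :=
      Subtype.ext (map_preSucc h0).symm
    rw [e1]
    exact (congrFun h1 ⟨preSucc t, hc⟩ : _)

lemma Kext_zero {n : ℕ} (G G' : {s : Finset (Fin (n+1)) // s.card = 0} → M)
    (h1 : Kpi G = Kpi G') : G = G' := by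
  funext t
  obtain ⟨t, ht⟩ := t
  have h0 : (0 : Fin (n+1)) ∉ t := by
    rw [Finset.card_eq_zero] at ht
    simp [ht]
  have hc : (preSucc t).card = 0 := by
    rw [← Finset.card_map (Fin.succEmb n), map_preSucc h0]
    exact (Finset.card_eq_zero.mp ht) ▸ rfl
  have e1 : (⟨t, ht⟩ : {s : Finset (Fin (n+1)) // s.card = 0}) =
      ⟨(preSucc t).map (Fin.succEmb n), by rw [Finset.card_map, hc]⟩ :=
    Subtype.ext (map_preSucc h0).symm
  rw [e1]
  exact (congrFun h1 ⟨preSucc t, hc⟩ : _)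

lemma gbar_map_succ {n i : ℕ} (G : {s : Finset (Fin (n+1)) // s.card = i} → M)
    (u : Finset (Fin n)) : gbar G (u.map (Fin.succEmb n)) = gbar (Kpi G) u := by
  by_cases h : u.card = i
  · rw [gbar_of_card _ _ h, gbar_of_card G _ (by rw [Finset.card_map, h])]
    rfl
  · rw [gbar, gbar, dif_neg (by rwa [Finset.card_map]), dif_neg h]

lemma gbar_insert_map_succ {n i : ℕ} (G : {s : Finset (Fin (n+1)) // s.card = i + 1} → M)
    (u : Finset (Fin n)) :
    gbar G (insert 0 (u.map (Fin.succEmb n))) = gbar (Krho G) u := by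
  by_cases h : u.card = i
  · rw [gbar_of_card _ _ h, gbar_of_card G _ (by
      rw [Finset.card_insert_of_notMem (zero_not_mem_map_succ _), Finset.card_map, h])]
    rfl
  · rw [gbar, gbar, dif_neg (by
      rw [Finset.card_insert_of_notMem (zero_not_mem_map_succ _), Finset.card_map]
      omega), dif_neg h]

lemma filter_lt_map_succ {n : ℕ} (s : Finset (Fin n)) (j : Fin n) :
    ((s.map (Fin.succEmb n)).filter (· < j.succ)).card = (s.filter (· < j)).card := by
  rw [Finset.filter_map, Finset.card_map]
  congr 1
  apply Finset.filter_congr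
  intro k _
  simp [Fin.succ_lt_succ_iff]

variable {n : ℕ} (z : A) (x : Fin n → A)

lemma Kpi_koszulMap_cons (i : ℕ) (G : {s : Finset (Fin (n+1)) // s.card = i} → M) :
    Kpi (koszulMap A M (Fin.cons z x) i G) = koszulMap A M x i (Kpi G) := by
  funext s
  obtain ⟨s, hs⟩ := s
  show koszulMap A M (Fin.cons z x) i G ⟨s.map (Fin.succEmb n), _⟩ = _
  rw [koszulMap_apply_eq (Fin.cons z x) i G _ (by rw [Finset.card_map, hs]),
    koszulMap_apply_eq x i (Kpi G) s hs, Finset.sum_map]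
  refine Finset.sum_congr rfl fun j _ => ?_
  rw [show (Fin.succEmb n) j = j.succ from rfl, filter_lt_map_succ,
    show (Finset.map (Fin.succEmb n) s).erase j.succ = (s.erase j).map (Fin.succEmb n) from
      (Finset.map_erase _ s j).symm,
    gbar_map_succ, Fin.cons_succ]

lemma Krho_koszulMap_cons_succ (i : ℕ) (G : {s : Finset (Fin (n+1)) // s.card = i + 1} → M) :
    Krho (koszulMap A M (Fin.cons z x) (i+1) G) =
      fun s => z • Kpi G s - koszulMap A M x i (Krho G) s := by
  funext s
  obtain ⟨s, hs⟩ := s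
  show koszulMap A M (Fin.cons z x) (i+1) G ⟨insert 0 (s.map (Fin.succEmb n)), _⟩ = _
  rw [koszulMap_apply_eq (Fin.cons z x) (i+1) G _ (by
    rw [Finset.card_insert_of_notMem (zero_not_mem_map_succ _), Finset.card_map, hs]),
    Finset.sum_insert (zero_not_mem_map_succ s)]
  have hz : (((insert (0 : Fin (n+1)) (s.map (Fin.succEmb n))).filter (· < 0)).card) = 0 := by
    rw [Finset.card_eq_zero]
    ext k
    simp only [Finset.mem_filter, Finset.notMem_empty, iff_false, not_and]
    exact fun _ => Fin.not_lt_zero k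
  rw [hz, Finset.erase_insert (zero_not_mem_map_succ s), Fin.cons_zero, pow_zero, one_mul,
    gbar_map_succ, gbar_of_card _ _ hs, Finset.sum_map]
  have hterm : ∀ j ∈ s, (((-1 : A) ^
        (((insert (0:Fin (n+1)) (s.map (Fin.succEmb n))).filter (· < (Fin.succEmb n) j)).card))
          * (Fin.cons z x : Fin (n+1) → A) ((Fin.succEmb n) j)) •
        gbar G ((insert (0:Fin (n+1)) (s.map (Fin.succEmb n))).erase ((Fin.succEmb n) j))
      = -((((-1 : A) ^ ((s.filter (· < j)).card)) * x j) • gbar (Krho G) (s.erase j)) := by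
    intro j _
    rw [show (Fin.succEmb n) j = j.succ from rfl]
    have hf : ((insert (0:Fin (n+1)) (s.map (Fin.succEmb n))).filter (· < j.succ)).card
        = (s.filter (· < j)).card + 1 := by
      rw [Finset.filter_insert, if_pos (Fin.succ_pos j),
        Finset.card_insert_of_notMem
          (fun hc => zero_not_mem_map_succ s (Finset.mem_of_mem_filter _ hc)),
        filter_lt_map_succ]
    have he : (insert (0:Fin (n+1)) (s.map (Fin.succEmb n))).erase j.succ
        = insert 0 ((s.erase j).map (Fin.succEmb n)) := by
      rw [Finset.erase_insert_of_ne (Fin.succ_ne_zero j).symm,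
        show (Finset.map (Fin.succEmb n) s).erase j.succ = (s.erase j).map (Fin.succEmb n) from
          (Finset.map_erase _ s j).symm]
    rw [hf, he, gbar_insert_map_succ, Fin.cons_succ, pow_succ]
    rw [show ((-1:A) ^ (s.filter (· < j)).card * -1 * x j)
      = -(((-1:A) ^ (s.filter (· < j)).card) * x j) by ring]
    rw [neg_smul]
  rw [Finset.sum_congr rfl hterm, koszulMap_apply_eq x i (Krho G) s hs, Finset.sum_neg_distrib,
    ← sub_eq_add_neg]
lemma Krho_koszulMap_cons_zero (G : {s : Finset (Fin (n+1)) // s.card = 0} → M) :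
    Krho (koszulMap A M (Fin.cons z x) 0 G) = fun s => z • Kpi G s := by
  funext s
  obtain ⟨s, hs⟩ := s
  obtain rfl : s = ∅ := Finset.card_eq_zero.mp hs
  show koszulMap A M (Fin.cons z x) 0 G ⟨insert 0 (Finset.map (Fin.succEmb n) ∅), _⟩ = _
  rw [koszulMap_apply_eq (Fin.cons z x) 0 G _ (by
    rw [Finset.card_insert_of_notMem (zero_not_mem_map_succ _), Finset.card_map, hs]),
    Finset.sum_insert (zero_not_mem_map_succ ∅)]
  have hz : (((insert (0 : Fin (n+1)) (Finset.map (Fin.succEmb n) ∅)).filter (· < 0)).card) = 0 := by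
    rw [Finset.card_eq_zero]
    ext k
    simp only [Finset.mem_filter, Finset.notMem_empty, iff_false, not_and]
    exact fun _ => Fin.not_lt_zero k
  rw [hz, Finset.erase_insert (zero_not_mem_map_succ ∅), Fin.cons_zero, pow_zero, one_mul,
    gbar_map_succ, gbar_of_card _ _ hs, Finset.map_empty, Finset.sum_empty, add_zero]

end ConsMachinery
section LemmaACons

set_option linter.unusedSectionVars false

variable {A : Type*} [CommRing A] {M : Type*} [AddCommGroup M] [Module A M]
variable {n : ℕ} (z : A) (x : Fin n → A)

lemma Kpi_gbar_eq {i : ℕ} (g' : {s : Finset (Fin n) // s.card = i} → M)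
    (hb : Finset (Fin n) → M) : Kpi (Ksig (n := n) i (gbar g') hb) = g' := by
  funext s
  exact (congrFun (Kpi_Ksig (gbar g') hb) s).trans (gbar_of_card g' s.1 s.2)

lemma Krho_gbar_eq {i : ℕ} (gb : Finset (Fin n) → M)
    (h' : {s : Finset (Fin n) // s.card = i} → M) :
    Krho (Ksig (n := n) (i+1) gb (gbar h')) = h' := by
  funext s
  exact (congrFun (Krho_Ksig gb (gbar h')) s).trans (gbar_of_card h' s.1 s.2)

lemma dcons_sig_left_pi {i : ℕ} (g' : {s : Finset (Fin n) // s.card = i} → M) :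
    Kpi (koszulMap A M (Fin.cons z x) i (Ksig i (gbar g') (fun _ => 0))) =
      koszulMap A M x i g' := by
  rw [Kpi_koszulMap_cons, Kpi_gbar_eq]

lemma dcons_sig_left_rho {i : ℕ} (g' : {s : Finset (Fin n) // s.card = i} → M) :
    Krho (koszulMap A M (Fin.cons z x) i (Ksig i (gbar g') (fun _ => 0))) =
      fun s => z • g' s := by
  cases i with
  | zero =>
    rw [Krho_koszulMap_cons_zero, Kpi_gbar_eq]
  | succ m =>
    rw [Krho_koszulMap_cons_succ]
    have h2 : Krho (Ksig (n := n) (m+1) (gbar g') (fun _ => 0)) = (0 : _) := by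
      funext u; exact congrFun (Krho_Ksig (gbar g') (fun _ => 0)) u
    rw [h2, map_zero, Kpi_gbar_eq]
    funext s
    simp

lemma dcons_sig_right_pi {m : ℕ} (h' : {s : Finset (Fin n) // s.card = m} → M) :
    Kpi (koszulMap A M (Fin.cons z x) (m+1) (Ksig (m+1) (fun _ => 0) (gbar h'))) = 0 := by
  rw [Kpi_koszulMap_cons]
  have h2 : Kpi (Ksig (n := n) (m+1) (fun _ => 0) (gbar h')) = (0 : _) := by
    funext u; exact congrFun (Kpi_Ksig (fun _ => 0) (gbar h')) u
  rw [h2, map_zero]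

lemma dcons_sig_right_rho {m : ℕ} (h' : {s : Finset (Fin n) // s.card = m} → M) :
    Krho (koszulMap A M (Fin.cons z x) (m+1) (Ksig (m+1) (fun _ => 0) (gbar h'))) =
      fun s => -(koszulMap A M x m h' s) := by
  rw [Krho_koszulMap_cons_succ]
  have h2 : Kpi (Ksig (n := n) (m+1) (fun _ => 0) (gbar h')) = (0 : _) := by
    funext u; exact congrFun (Kpi_Ksig (fun _ => 0) (gbar h')) u
  rw [h2, Krho_gbar_eq (fun _ => (0 : M)) h']
  funext s
  simp

lemma Kpi_sub {i : ℕ} (G G' : {s : Finset (Fin (n+1)) // s.card = i} → M) :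
    Kpi (G - G') = Kpi G - Kpi G' := rfl

lemma Krho_sub {i : ℕ} (G G' : {s : Finset (Fin (n+1)) // s.card = i + 1} → M) :
    Krho (G - G') = Krho G - Krho G' := rfl

lemma kvan_cons (k : ℕ) (hv : ∀ j ≤ k, kvan A M x j) :
    kvan A M (Fin.cons z x) k := by
  cases k with
  | zero =>
    intro G hG
    have h1 : koszulMap A M x 0 (Kpi G) = 0 := by
      rw [← Kpi_koszulMap_cons, hG]; rfl
    have h2 := hv 0 le_rfl _ h1
    exact Kext_zero G 0 (by rw [h2]; rfl)
  | succ i =>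
    intro G hG
    have hdg : koszulMap A M x (i+1) (Kpi G) = 0 := by
      rw [← Kpi_koszulMap_cons, hG]; rfl
    obtain ⟨g', hg'⟩ := hv (i+1) le_rfl _ hdg
    have hdh : koszulMap A M x i (Krho G) = fun s => z • Kpi G s := by
      have h0 := Krho_koszulMap_cons_succ z x i G
      rw [hG] at h0
      funext s
      have h1 := congrFun h0 s
      have h2 : Krho (0 : {s : Finset (Fin (n+1)) // s.card = i + 1 + 1} → M) s = 0 := rfl
      rw [h2] at h1
      exact (sub_eq_zero.mp h1.symm).symm
    set D1 := koszulMap A M (Fin.cons z x) i (Ksig i (gbar g') (fun _ => 0)) with hD1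
    set G₂ := G - D1 with hG₂def
    have hπ2 : Kpi G₂ = 0 := by
      funext s
      show Kpi G s - Kpi D1 s = 0
      rw [congrFun (dcons_sig_left_pi z x g') s, congrFun hg' s, sub_self]
    have hρ2 : Krho G₂ = fun s => Krho G s - z • g' s := by
      funext s
      show Krho G s - Krho D1 s = _
      rw [congrFun (dcons_sig_left_rho z x g') s]
    have hd2 : koszulMap A M x i (Krho G₂) = 0 := by
      have : Krho G₂ = Krho G - fun s => z • g' s := by rw [hρ2]; rfl
      rw [this, map_sub, hdh]
      have : (fun s => z • g' s) = z • g' := rfl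
      rw [this, map_smul, hg']
      funext s
      simp
    cases i with
    | zero =>
      have h0 := hv 0 (by omega) _ hd2
      have hzero : G₂ = 0 := Kext_succ G₂ 0 (by rw [hπ2]; rfl) (by rw [h0]; rfl)
      exact ⟨Ksig 0 (gbar g') (fun _ => 0), (sub_eq_zero.mp hzero).symm⟩
    | succ m =>
      obtain ⟨h', hh'⟩ := hv (m+1) (by omega) _ hd2
      refine ⟨Ksig (m+1) (gbar g') (fun _ => 0) - Ksig (m+1) (fun _ => 0) (gbar h'), ?_⟩
      apply Kext_succ
      · rw [map_sub, Kpi_sub, dcons_sig_left_pi z x g', dcons_sig_right_pi z x h', hg',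
          sub_zero]
      · rw [map_sub, Krho_sub, dcons_sig_left_rho z x g', dcons_sig_right_rho z x h']
        funext s
        show z • g' s - -(koszulMap A M x m h' s) = Krho G s
        rw [congrFun hh' s, congrFun hρ2 s]
        abel

end LemmaACons
section SnocMachinery

set_option linter.unusedSectionVars false

variable {A : Type*} [CommRing A] {M : Type*} [AddCommGroup M] [Module A M]

/-- `Fin.castSucc` as an embedding. -/
def csEmb (n : ℕ) : Fin n ↪ Fin (n + 1) :=
  ⟨Fin.castSucc, Fin.castSucc_injective n⟩

/-- Preimage of a finset of `Fin (n+1)` under `Fin.castSucc`. -/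
def preCS {n : ℕ} (t : Finset (Fin (n + 1))) : Finset (Fin n) :=
  (t.subtype (· ≠ Fin.last n)).map
    ⟨fun j => j.1.castPred j.2, fun a b hab => Subtype.ext (by
      have := congrArg Fin.castSucc hab
      rwa [Fin.castSucc_castPred, Fin.castSucc_castPred] at this)⟩

lemma csEmb_apply {n : ℕ} (k : Fin n) : csEmb n k = k.castSucc := rfl

lemma castSucc_ne_last {n : ℕ} (k : Fin n) : k.castSucc ≠ Fin.last n :=
  (Fin.castSucc_lt_last k).ne

lemma mem_preCS {n : ℕ} {t : Finset (Fin (n + 1))} {k : Fin n} :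
    k ∈ preCS t ↔ k.castSucc ∈ t := by
  simp only [preCS, Finset.mem_map, Finset.mem_subtype, Function.Embedding.coeFn_mk]
  constructor
  · rintro ⟨⟨j, hj0⟩, hjt, rfl⟩
    show (j.castPred hj0).castSucc ∈ t
    rwa [Fin.castSucc_castPred]
  · intro hk
    refine ⟨⟨k.castSucc, castSucc_ne_last k⟩, hk, ?_⟩
    apply Fin.castSucc_injective n
    exact Fin.castSucc_castPred _ (castSucc_ne_last k)

lemma preCS_map {n : ℕ} (s : Finset (Fin n)) : preCS (s.map (csEmb n)) = s := by
  ext k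
  rw [mem_preCS]
  exact Finset.mem_map' _

lemma last_not_mem_map_cs {n : ℕ} (s : Finset (Fin n)) :
    Fin.last n ∉ s.map (csEmb n) := by
  simp only [Finset.mem_map]
  rintro ⟨k, _, hk⟩
  exact castSucc_ne_last k hk

lemma map_preCS {n : ℕ} {t : Finset (Fin (n + 1))} (h : Fin.last n ∉ t) :
    (preCS t).map (csEmb n) = t := by
  ext j
  simp only [Finset.mem_map]
  constructor
  · rintro ⟨k, hk, rfl⟩
    exact mem_preCS.mp hk
  · intro hj
    have hj0 : j ≠ Fin.last n := fun hj0 => h (hj0 ▸ hj)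
    exact ⟨j.castPred hj0, mem_preCS.mpr (by rwa [Fin.castSucc_castPred]),
      Fin.castSucc_castPred j hj0⟩

lemma insert_map_preCS {n : ℕ} {t : Finset (Fin (n + 1))} (h : Fin.last n ∈ t) :
    insert (Fin.last n) ((preCS t).map (csEmb n)) = t := by
  ext j
  simp only [Finset.mem_insert, Finset.mem_map]
  constructor
  · rintro (rfl | ⟨k, hk, rfl⟩)
    · exact h
    · exact mem_preCS.mp hk
  · intro hj
    by_cases hj0 : j = Fin.last n
    · exact Or.inl hj0
    · exact Or.inr ⟨j.castPred hj0, mem_preCS.mpr (by rwa [Fin.castSucc_castPred]),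
        Fin.castSucc_castPred j hj0⟩

lemma preCS_insert_last {n : ℕ} (t : Finset (Fin (n + 1))) :
    preCS (insert (Fin.last n) t) = preCS t := by
  ext k
  rw [mem_preCS, mem_preCS, Finset.mem_insert]
  exact ⟨fun h => h.resolve_left (castSucc_ne_last k), Or.inr⟩

/-- First component (sets avoiding `last`) of a cochain over `Fin (n+1)`. -/
def KpiS {n i : ℕ} (G : {s : Finset (Fin (n+1)) // s.card = i} → M) :
    {s : Finset (Fin n) // s.card = i} → M :=
  fun s => G ⟨s.1.map (csEmb n), by rw [Finset.card_map, s.2]⟩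

/-- Second component (sets containing `last`) of a cochain over `Fin (n+1)`. -/
def KrhoS {n i : ℕ} (G : {s : Finset (Fin (n+1)) // s.card = i + 1} → M) :
    {s : Finset (Fin n) // s.card = i} → M :=
  fun s => G ⟨insert (Fin.last n) (s.1.map (csEmb n)),
    by rw [Finset.card_insert_of_notMem (last_not_mem_map_cs s.1), Finset.card_map, s.2]⟩

/-- Assemble a cochain over `Fin (n+1)` from two total functions. -/
noncomputable def KsigS {n : ℕ} (i : ℕ) (gb hb : Finset (Fin n) → M) :
    {s : Finset (Fin (n+1)) // s.card = i} → M :=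
  fun t => if Fin.last n ∈ t.1 then hb (preCS t.1) else gb (preCS t.1)

lemma KpiS_KsigS {n i : ℕ} (gb hb : Finset (Fin n) → M) :
    KpiS (KsigS (n := n) i gb hb) = fun s => gb s.1 := by
  funext s
  rw [KpiS, KsigS, if_neg (last_not_mem_map_cs s.1), preCS_map]

lemma KrhoS_KsigS {n i : ℕ} (gb hb : Finset (Fin n) → M) :
    KrhoS (KsigS (n := n) (i+1) gb hb) = fun s => hb s.1 := by
  funext s
  rw [KrhoS, KsigS, if_pos (Finset.mem_insert_self _ _), preCS_insert_last, preCS_map]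

lemma KextS_succ {n i : ℕ} (G G' : {s : Finset (Fin (n+1)) // s.card = i + 1} → M)
    (h1 : KpiS G = KpiS G') (h2 : KrhoS G = KrhoS G') : G = G' := by
  funext t
  obtain ⟨t, ht⟩ := t
  by_cases h0 : Fin.last n ∈ t
  · have hc : (preCS t).card = i := by
      have := ht
      rw [← insert_map_preCS h0,
        Finset.card_insert_of_notMem (last_not_mem_map_cs _), Finset.card_map] at this
      omega
    have e1 : (⟨t, ht⟩ : {s : Finset (Fin (n+1)) // s.card = i + 1}) =
        ⟨insert (Fin.last n) ((preCS t).map (csEmb n)), by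
          rw [Finset.card_insert_of_notMem (last_not_mem_map_cs _), Finset.card_map, hc]⟩ :=
      Subtype.ext (insert_map_preCS h0).symm
    rw [e1]
    exact (congrFun h2 ⟨preCS t, hc⟩ : _)
  · have hc : (preCS t).card = i + 1 := by
      rw [← Finset.card_map (csEmb n), map_preCS h0, ht]
    have e1 : (⟨t, ht⟩ : {s : Finset (Fin (n+1)) // s.card = i + 1}) =
        ⟨(preCS t).map (csEmb n), by rw [Finset.card_map, hc]⟩ :=
      Subtype.ext (map_preCS h0).symm
    rw [e1]
    exact (congrFun h1 ⟨preCS t, hc⟩ : _)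

lemma KextS_zero {n : ℕ} (G G' : {s : Finset (Fin (n+1)) // s.card = 0} → M)
    (h1 : KpiS G = KpiS G') : G = G' := by
  funext t
  obtain ⟨t, ht⟩ := t
  have h0 : Fin.last n ∉ t := by
    rw [Finset.card_eq_zero] at ht
    simp [ht]
  have hc : (preCS t).card = 0 := by
    rw [← Finset.card_map (csEmb n), map_preCS h0]
    exact (Finset.card_eq_zero.mp ht) ▸ rfl
  have e1 : (⟨t, ht⟩ : {s : Finset (Fin (n+1)) // s.card = 0}) =
      ⟨(preCS t).map (csEmb n), by rw [Finset.card_map, hc]⟩ :=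
    Subtype.ext (map_preCS h0).symm
  rw [e1]
  exact (congrFun h1 ⟨preCS t, hc⟩ : _)

lemma gbar_map_cs {n i : ℕ} (G : {s : Finset (Fin (n+1)) // s.card = i} → M)
    (u : Finset (Fin n)) : gbar G (u.map (csEmb n)) = gbar (KpiS G) u := by
  by_cases h : u.card = i
  · rw [gbar_of_card _ _ h, gbar_of_card G _ (by rw [Finset.card_map, h])]
    rfl
  · rw [gbar, gbar, dif_neg (by rwa [Finset.card_map]), dif_neg h]

lemma gbar_insert_map_cs {n i : ℕ} (G : {s : Finset (Fin (n+1)) // s.card = i + 1} → M)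
    (u : Finset (Fin n)) :
    gbar G (insert (Fin.last n) (u.map (csEmb n))) = gbar (KrhoS G) u := by
  by_cases h : u.card = i
  · rw [gbar_of_card _ _ h, gbar_of_card G _ (by
      rw [Finset.card_insert_of_notMem (last_not_mem_map_cs _), Finset.card_map, h])]
    rfl
  · rw [gbar, gbar, dif_neg (by
      rw [Finset.card_insert_of_notMem (last_not_mem_map_cs _), Finset.card_map]
      omega), dif_neg h]

lemma filter_lt_map_cs {n : ℕ} (s : Finset (Fin n)) (j : Fin n) :
    ((s.map (csEmb n)).filter (· < j.castSucc)).card = (s.filter (· < j)).card := by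
  rw [Finset.filter_map, Finset.card_map]
  exact congrArg Finset.card (Finset.filter_congr (fun k _ => by
    simp [csEmb_apply, Fin.castSucc_lt_castSucc_iff]))

lemma filter_lt_last_eq {n : ℕ} (s : Finset (Fin n)) :
    (insert (Fin.last n) (s.map (csEmb n))).filter (· < Fin.last n) = s.map (csEmb n) := by
  rw [Finset.filter_insert, if_neg (lt_irrefl _)]
  apply Finset.filter_true_of_mem
  intro k hk
  obtain ⟨j, _, rfl⟩ := Finset.mem_map.mp hk
  exact Fin.castSucc_lt_last j

variable {n : ℕ} (z : A) (x : Fin n → A)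

lemma KpiS_koszulMap_snoc (i : ℕ) (G : {s : Finset (Fin (n+1)) // s.card = i} → M) :
    KpiS (koszulMap A M (Fin.snoc x z) i G) = koszulMap A M x i (KpiS G) := by
  funext s
  obtain ⟨s, hs⟩ := s
  show koszulMap A M (Fin.snoc x z) i G ⟨s.map (csEmb n), _⟩ = _
  rw [koszulMap_apply_eq (Fin.snoc x z) i G _ (by rw [Finset.card_map, hs]),
    koszulMap_apply_eq x i (KpiS G) s hs, Finset.sum_map]
  refine Finset.sum_congr rfl fun j _ => ?_
  rw [show (csEmb n) j = j.castSucc from rfl, filter_lt_map_cs,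
    show (Finset.map (csEmb n) s).erase j.castSucc = (s.erase j).map (csEmb n) from
      (Finset.map_erase _ s j).symm,
    gbar_map_cs, Fin.snoc_castSucc]

lemma KrhoS_koszulMap_snoc_succ (i : ℕ) (G : {s : Finset (Fin (n+1)) // s.card = i + 1} → M) :
    KrhoS (koszulMap A M (Fin.snoc x z) (i+1) G) =
      fun s => koszulMap A M x i (KrhoS G) s + (((-1 : A) ^ (i+1)) * z) • KpiS G s := by
  funext s
  obtain ⟨s, hs⟩ := s
  show koszulMap A M (Fin.snoc x z) (i+1) G ⟨insert (Fin.last n) (s.map (csEmb n)), _⟩ = _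
  rw [koszulMap_apply_eq (Fin.snoc x z) (i+1) G _ (by
    rw [Finset.card_insert_of_notMem (last_not_mem_map_cs _), Finset.card_map, hs]),
    Finset.sum_insert (last_not_mem_map_cs s)]
  have hlf : ((insert (Fin.last n) (s.map (csEmb n))).filter (· < Fin.last n)).card = i + 1 := by
    rw [filter_lt_last_eq, Finset.card_map, hs]
  rw [hlf, Finset.erase_insert (last_not_mem_map_cs s),
    show (Fin.snoc x z : Fin (n+1) → A) (Fin.last n) = z from Fin.snoc_last ..,
    gbar_map_cs, gbar_of_card _ _ hs]
  rw [Finset.sum_map]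
  have hterm : ∀ j ∈ s, (((-1 : A) ^
        (((insert (Fin.last n) (s.map (csEmb n))).filter (· < (csEmb n) j)).card))
          * (Fin.snoc x z : Fin (n+1) → A) ((csEmb n) j)) •
        gbar G ((insert (Fin.last n) (s.map (csEmb n))).erase ((csEmb n) j))
      = (((-1 : A) ^ ((s.filter (· < j)).card)) * x j) • gbar (KrhoS G) (s.erase j) := by
    intro j _
    rw [show (csEmb n) j = j.castSucc from rfl]
    have hf : ((insert (Fin.last n) (s.map (csEmb n))).filter (· < j.castSucc)).card
        = (s.filter (· < j)).card := by
      rw [Finset.filter_insert, if_neg (not_lt.mpr (Fin.le_last _)), filter_lt_map_cs]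
    have he : (insert (Fin.last n) (s.map (csEmb n))).erase j.castSucc
        = insert (Fin.last n) ((s.erase j).map (csEmb n)) := by
      rw [Finset.erase_insert_of_ne (castSucc_ne_last j).symm,
        show (Finset.map (csEmb n) s).erase j.castSucc = (s.erase j).map (csEmb n) from
          (Finset.map_erase _ s j).symm]
    rw [hf, he, gbar_insert_map_cs, Fin.snoc_castSucc]
  rw [Finset.sum_congr rfl hterm, koszulMap_apply_eq x i (KrhoS G) s hs, add_comm]

lemma KrhoS_koszulMap_snoc_zero (G : {s : Finset (Fin (n+1)) // s.card = 0} → M) :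
    KrhoS (koszulMap A M (Fin.snoc x z) 0 G) = fun s => z • KpiS G s := by
  funext s
  obtain ⟨s, hs⟩ := s
  obtain rfl : s = ∅ := Finset.card_eq_zero.mp hs
  show koszulMap A M (Fin.snoc x z) 0 G ⟨insert (Fin.last n) (Finset.map (csEmb n) ∅), _⟩ = _
  rw [koszulMap_apply_eq (Fin.snoc x z) 0 G _ (by
    rw [Finset.card_insert_of_notMem (last_not_mem_map_cs _), Finset.card_map, hs]),
    Finset.sum_insert (last_not_mem_map_cs ∅)]
  have hlf : ((insert (Fin.last n) (Finset.map (csEmb n) ∅)).filter (· < Fin.last n)).card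
      = 0 := by
    rw [filter_lt_last_eq, Finset.card_map, hs]
  rw [hlf, Finset.erase_insert (last_not_mem_map_cs ∅),
    show (Fin.snoc x z : Fin (n+1) → A) (Fin.last n) = z from Fin.snoc_last ..,
    gbar_map_cs, gbar_of_card _ _ hs, pow_zero, one_mul, Finset.map_empty, Finset.sum_empty,
    add_zero]

lemma KpiS_sub {i : ℕ} (G G' : {s : Finset (Fin (n+1)) // s.card = i} → M) :
    KpiS (G - G') = KpiS G - KpiS G' := rfl

lemma KpiS_gbar_eq {i : ℕ} (g' : {s : Finset (Fin n) // s.card = i} → M)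
    (hb : Finset (Fin n) → M) : KpiS (KsigS (n := n) i (gbar g') hb) = g' := by
  funext s
  exact (congrFun (KpiS_KsigS (gbar g') hb) s).trans (gbar_of_card g' s.1 s.2)

lemma KrhoS_gbar_eq {i : ℕ} (gb : Finset (Fin n) → M)
    (h' : {s : Finset (Fin n) // s.card = i} → M) :
    KrhoS (KsigS (n := n) (i+1) gb (gbar h')) = h' := by
  funext s
  exact (congrFun (KrhoS_KsigS gb (gbar h')) s).trans (gbar_of_card h' s.1 s.2)

end SnocMachinery
section Contraction

set_option linter.unusedSectionVars false

variable {A : Type*} [CommRing A] {M : Type*} [AddCommGroup M] [Module A M]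
variable {n : ℕ} (x : Fin n → A)

/-- The contraction `h_m` of a cochain `g` against the basis direction `m`. -/
noncomputable def hseq (A' : Type*) [CommRing A'] {M' : Type*} [AddCommGroup M']
    [Module A' M'] {n' : ℕ} {i : ℕ} (m : Fin n')
    (g : {s : Finset (Fin n') // s.card = i + 1} → M') :
    {s : Finset (Fin n') // s.card = i} → M' :=
  fun s => if m ∈ s.1 then 0
    else ((-1 : A') ^ ((s.1.filter (· < m)).card)) • gbar g (insert m s.1)

lemma gbar_hseq {i : ℕ} (m : Fin n) (g : {s : Finset (Fin n) // s.card = i + 1} → M)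
    (u : Finset (Fin n)) (hu : u.card = i) :
    gbar (hseq A m g) u = if m ∈ u then 0
      else ((-1 : A) ^ ((u.filter (· < m)).card)) • gbar g (insert m u) :=
  gbar_of_card _ _ hu

lemma neg_one_pow_add_two (c : ℕ) : (-1 : A) ^ (c + 2) = (-1 : A) ^ c := by
  rw [pow_add]
  norm_num

lemma kontract_single {i : ℕ} (m : Fin n) (g : {s : Finset (Fin n) // s.card = i + 1} → M)
    (hg : koszulMap A M x (i+1) g = 0) :
    koszulMap A M x i (hseq A m g) = fun t => x m • g t := by
  funext t
  obtain ⟨t, ht⟩ := t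
  rw [koszulMap_apply_eq x i (hseq A m g) t ht]
  by_cases hm : m ∈ t
  · rw [Finset.sum_eq_single_of_mem m hm (fun b hb hbm => by
      rw [gbar_hseq _ _ _ (by rw [Finset.card_erase_of_mem hb, ht]; omega),
        if_pos (Finset.mem_erase.mpr ⟨fun hc => hbm hc.symm, hm⟩), smul_zero])]
    rw [gbar_hseq _ _ _ (by rw [Finset.card_erase_of_mem hm, ht]; omega),
      if_neg (Finset.notMem_erase m t), Finset.insert_erase hm,
      Finset.filter_erase, Finset.erase_eq_of_notMem (by
        simp only [Finset.mem_filter, not_and]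
        exact fun _ => lt_irrefl m),
      gbar_of_card _ _ ht, smul_smul]
    show ((-1:A) ^ (t.filter (· < m)).card * x m * (-1:A) ^ (t.filter (· < m)).card) • _ = _
    rw [mul_comm, ← mul_assoc, ← pow_add, Even.neg_one_pow ⟨(t.filter (· < m)).card, rfl⟩,
      one_mul]
  · -- m ∉ t : use the cocycle relation on `insert m t`
    have hu : (insert m t).card = (i + 1) + 1 := by
      rw [Finset.card_insert_of_notMem hm, ht]
    have hcoc := congrFun hg ⟨insert m t, hu⟩
    rw [koszulMap_apply_eq x (i+1) g (insert m t) hu, Finset.sum_insert hm] at hcoc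
    have hfm : ((insert m t).filter (· < m)) = t.filter (· < m) := by
      rw [Finset.filter_insert, if_neg (lt_irrefl m)]
    rw [hfm, Finset.erase_insert hm] at hcoc
    have hsum := eq_neg_of_add_eq_zero_left (hcoc.trans rfl)
    -- hsum : ∑ j ∈ t, ((-1)^((insert m t).filter (·<j)).card * x j) • gbar g ((insert m t).erase j)
    --        = -(((-1)^((t.filter (·<m)).card) * x m) • gbar g t)
    have hterm : ∀ j ∈ t,
        (((-1:A) ^ ((t.filter (· < j)).card)) * x j) • gbar (hseq A m g) (t.erase j)
        = ((-1:A) ^ ((t.filter (· < m)).card + 1)) •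
            ((((-1:A) ^ (((insert m t).filter (· < j)).card)) * x j) •
              gbar g ((insert m t).erase j)) := by
      intro j hj
      have hmj : m ≠ j := fun hc => hm (hc ▸ hj)
      rw [gbar_hseq _ _ _ (by rw [Finset.card_erase_of_mem hj, ht]; omega),
        if_neg (fun hc => hm (Finset.mem_of_mem_erase hc)),
        show (insert m t).erase j = insert m (t.erase j) from
          Finset.erase_insert_of_ne hmj, smul_smul, smul_smul]
      congr 1
      -- coefficient identity in A
      have herase : ((t.erase j).filter (· < m)) = (t.filter (· < m)).erase j := by
        rw [Finset.filter_erase]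
      by_cases hjm : j < m
      · have hjmem : j ∈ t.filter (· < m) := Finset.mem_filter.mpr ⟨hj, hjm⟩
        have h1 : ((t.erase j).filter (· < m)).card + 1 = (t.filter (· < m)).card := by
          rw [herase, Finset.card_erase_of_mem hjmem]
          have : 0 < (t.filter (· < m)).card := Finset.card_pos.mpr ⟨j, hjmem⟩
          omega
        have h2 : ((insert m t).filter (· < j)) = t.filter (· < j) := by
          rw [Finset.filter_insert, if_neg (asymm hjm)]
        rw [h2, ← h1]
        generalize ((t.erase j).filter (· < m)).card = a
        generalize (t.filter (· < j)).card = b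
        rw [show a + 1 + 1 = a + 2 from rfl, neg_one_pow_add_two]
        ring
      · have hmjlt : m < j := lt_of_le_of_ne (not_lt.mp hjm) hmj
        have hnot : j ∉ t.filter (· < m) := fun hc =>
          asymm hmjlt (Finset.mem_filter.mp hc).2
        have h1 : ((t.erase j).filter (· < m)).card = (t.filter (· < m)).card := by
          rw [herase, Finset.erase_eq_of_notMem hnot]
        have h2 : ((insert m t).filter (· < j)).card = (t.filter (· < j)).card + 1 := by
          rw [Finset.filter_insert, if_pos hmjlt,
            Finset.card_insert_of_notMem (fun hc => hm (Finset.mem_of_mem_filter _ hc))]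
        rw [h1, h2]
        generalize (t.filter (· < m)).card = a
        generalize (t.filter (· < j)).card = b
        rw [pow_succ, pow_succ]
        ring
    have hSneg := congrArg Neg.neg hsum
    rw [neg_neg] at hSneg
    rw [Finset.sum_congr rfl hterm, ← Finset.smul_sum, ← hSneg, smul_neg, smul_smul]
    have hc : (-1:A) ^ ((t.filter (· < m)).card + 1) *
        ((-1:A) ^ ((t.filter (· < m)).card) * x m) = -x m := by
      rw [← mul_assoc, ← pow_add,
        show (t.filter (· < m)).card + 1 + (t.filter (· < m)).card
          = 2 * (t.filter (· < m)).card + 1 by ring,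
        Odd.neg_one_pow ⟨(t.filter (· < m)).card, by ring⟩, neg_one_mul]
    rw [hc, neg_smul, neg_neg, gbar_of_card _ _ ht]

lemma kontract {i : ℕ} (z : A) (hz : z ∈ Ideal.span (Set.range x))
    (g : {s : Finset (Fin n) // s.card = i + 1} → M)
    (hg : koszulMap A M x (i+1) g = 0) :
    ∃ h, koszulMap A M x i h = fun t => z • g t := by
  induction hz using Submodule.span_induction with
  | mem w hw =>
    obtain ⟨m, rfl⟩ := hw
    exact ⟨hseq A m g, kontract_single x m g hg⟩
  | zero => exact ⟨0, by rw [map_zero]; funext t; rw [zero_smul]; rfl⟩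
  | add w w' _ _ hw hw' =>
    obtain ⟨h1, hh1⟩ := hw
    obtain ⟨h2, hh2⟩ := hw'
    refine ⟨h1 + h2, ?_⟩
    rw [map_add, hh1, hh2]
    funext t
    show w • g t + w' • g t = (w + w') • g t
    rw [add_smul]
  | smul a w _ hw =>
    obtain ⟨h1, hh1⟩ := hw
    refine ⟨a • h1, ?_⟩
    rw [map_smul, hh1]
    funext t
    show a • (w • g t) = (a • w) • g t
    rw [smul_smul, smul_eq_mul]

end Contraction
section LemmaBSnoc

set_option linter.unusedSectionVars false

variable {A : Type*} [CommRing A] {M : Type*} [AddCommGroup M] [Module A M]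
variable {n : ℕ} (z : A) (x : Fin n → A)

lemma kvan_of_kvan_snoc (hz : z ∈ Ideal.span (Set.range x)) (k : ℕ)
    (hv : kvan A M (Fin.snoc x z) k) : kvan A M x k := by
  cases k with
  | zero =>
    intro g hg
    have hxz : ∀ j : Fin n, x j • gbar g ∅ = 0 := by
      intro j
      have hsing := congrFun hg ⟨{j}, Finset.card_singleton j⟩
      rw [koszulMap_apply_eq x 0 g {j} (Finset.card_singleton j),
        Finset.sum_singleton] at hsing
      have hf : ({j} : Finset (Fin n)).filter (· < j) = ∅ := by
        apply Finset.filter_false_of_mem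
        intro k hk
        rw [Finset.mem_singleton] at hk
        subst hk
        exact lt_irrefl k
      rw [hf, Finset.card_empty, pow_zero, one_mul, Finset.erase_singleton] at hsing
      exact hsing.trans rfl
    have hzg : (fun s : {s : Finset (Fin n) // s.card = 0} => z • g s)
        = (0 : {s : Finset (Fin n) // s.card = 0} → M) := by
      funext s
      obtain ⟨s, hs⟩ := s
      obtain rfl : s = ∅ := Finset.card_eq_zero.mp hs
      obtain ⟨c, hc⟩ := (Submodule.mem_span_range_iff_exists_fun A).mp hz
      show z • g ⟨∅, hs⟩ = 0
      rw [show g ⟨∅, hs⟩ = gbar g ∅ from (gbar_of_card g ∅ hs).symm, ← hc, Finset.sum_smul]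
      refine Finset.sum_eq_zero fun j _ => ?_
      rw [smul_eq_mul, mul_smul, hxz, smul_zero]
    have hG : koszulMap A M (Fin.snoc x z) 0 (KsigS 0 (gbar g) (fun _ => 0)) = 0 := by
      refine KextS_succ _ 0 ?_ ?_
      · rw [KpiS_koszulMap_snoc, KpiS_gbar_eq, hg]
        rfl
      · rw [KrhoS_koszulMap_snoc_zero, KpiS_gbar_eq, hzg]
        rfl
    have h0 := hv _ hG
    funext s
    rw [congrFun (KpiS_gbar_eq (n := n) g (fun _ => 0)).symm s, h0]
    rfl
  | succ m =>
    intro g hg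
    obtain ⟨h, hh⟩ := kontract x z hz g hg
    set w : {s : Finset (Fin n) // s.card = m} → M := (-((-1:A)^(m+1))) • h with hw
    have hdw : koszulMap A M x m w = fun s => (-((-1:A)^(m+1) * z)) • g s := by
      rw [hw, map_smul, hh]
      funext s
      show (-((-1:A)^(m+1))) • (z • g s) = _
      rw [smul_smul, neg_mul]
    have hG : koszulMap A M (Fin.snoc x z) (m+1) (KsigS (m+1) (gbar g) (gbar w)) = 0 := by
      refine KextS_succ _ 0 ?_ ?_
      · rw [KpiS_koszulMap_snoc, KpiS_gbar_eq, hg]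
        rfl
      · rw [KrhoS_koszulMap_snoc_succ, KrhoS_gbar_eq, KpiS_gbar_eq]
        funext s
        show koszulMap A M x m w s + (((-1:A)^(m+1)) * z) • g s = KrhoS 0 s
        rw [congrFun hdw s, neg_smul, neg_add_cancel]
        rfl
    obtain ⟨W, hW⟩ := hv _ hG
    refine ⟨KpiS W, ?_⟩
    rw [← KpiS_koszulMap_snoc, hW, KpiS_gbar_eq]

/-! ### kgrSeq-level consequences -/

lemma kgrSeq_le_cons : kgrSeq A M x ≤ kgrSeq A M (Fin.cons z x) :=
  kgrSeq_le_kgrSeq fun k hvan => kvan_cons z x k hvan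

lemma kgrSeq_snoc_le (hz : z ∈ Ideal.span (Set.range x)) :
    kgrSeq A M (Fin.snoc x z) ≤ kgrSeq A M x :=
  kgrSeq_le_kgrSeq fun k hvan => kvan_of_kvan_snoc z x hz k (hvan k le_rfl)

lemma kgrSeq_cast {n' : ℕ} (h : n' = n) :
    kgrSeq A M (x ∘ Fin.cast h) = kgrSeq A M x := by
  subst h
  rfl

lemma kgrSeq_le_append (m : ℕ) (u : Fin m → A) {nn : ℕ} (y : Fin nn → A) :
    kgrSeq A M y ≤ kgrSeq A M (Fin.append u y) := by
  induction m with
  | zero =>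
    obtain rfl : u = Fin.elim0 := funext fun i => i.elim0
    rw [Fin.elim0_append, kgrSeq_cast]
  | succ m ih =>
    have h1 : Fin.append u y
        = Fin.cons (u 0) (Fin.append (Fin.tail u) y) ∘ Fin.cast (Nat.add_right_comm m 1 nn) := by
      conv_lhs => rw [← Fin.cons_self_tail u]
      exact Fin.append_cons (u 0) (Fin.tail u) y
    rw [h1, kgrSeq_cast]
    exact le_trans (ih (Fin.tail u)) (kgrSeq_le_cons (u 0) (Fin.append (Fin.tail u) y))

lemma kgrSeq_append_le (m : ℕ) (u : Fin m → A) {nn : ℕ} (y : Fin nn → A)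
    (hy : ∀ i, y i ∈ Ideal.span (Set.range u)) :
    kgrSeq A M (Fin.append u y) ≤ kgrSeq A M u := by
  induction nn with
  | zero =>
    obtain rfl : y = Fin.elim0 := funext fun i => i.elim0
    rw [Fin.append_elim0, kgrSeq_cast]
  | succ k ih =>
    have h1 : Fin.append u y = Fin.snoc (Fin.append u (Fin.init y)) (y (Fin.last k)) := by
      conv_lhs => rw [← Fin.snoc_init_self y]
      exact Fin.append_snoc u (Fin.init y) (y (Fin.last k))
    rw [h1]
    have hsub : Set.range u ⊆ Set.range (Fin.append u (Fin.init y)) := by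
      rintro _ ⟨i, rfl⟩
      exact ⟨Fin.castAdd k i, by rw [Fin.append_left]⟩
    refine le_trans (kgrSeq_snoc_le _ _ (Ideal.span_mono hsub (hy (Fin.last k)))) ?_
    exact ih (Fin.init y) (fun i => hy i.castSucc)

lemma kgrSeq_le_of_span {m nn : ℕ} (u : Fin m → A) (y : Fin nn → A)
    (hy : ∀ i, y i ∈ Ideal.span (Set.range u)) :
    kgrSeq A M y ≤ kgrSeq A M u :=
  le_trans (kgrSeq_le_append m u y) (kgrSeq_append_le m u y hy)

end LemmaBSnoc
section Final

set_option linter.unusedSectionVars false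
set_option maxHeartbeats 1000000

/-- For every ideal `𝔞` of `A`,
`kgr_{A⋈^f J}(𝔞^e, A⋈^f J) ≤ min { kgr_A(𝔞, A), kgr_A(𝔞, J) }`. -/
theorem kgr_ext_le_min {A B : Type*} [CommRing A] [CommRing B] (f : A →+* B)
    (J : Ideal B) (𝔞 : Ideal A) :
    kgr ↥(amalgamation f J) (idealExt f J 𝔞) ↥(amalgamation f J) ≤
      min (kgr A 𝔞 A) (kgrIdeal f J 𝔞) := by
  classical
  letI : Module A ↥J := Module.compHom ↥J f
  letI : Module A ↥(amalgamation f J) := Module.compHom ↥(amalgamation f J) (amalgIota f J)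
  have hsmulR : ∀ (c : A) (m : ↥(amalgamation f J)), c • m = (amalgIota f J) c • m :=
    fun _ _ => rfl
  let e : ↥(amalgamation f J) ≃ₗ[A] (A × ↥J) :=
    { toFun := fun r => (r.1.1, ⟨r.1.2 - f r.1.1, r.2⟩)
      map_add' := fun r r' => by
        refine Prod.ext rfl (Subtype.ext ?_)
        show (r.1.2 + r'.1.2) - f (r.1.1 + r'.1.1) = (r.1.2 - f r.1.1) + (r'.1.2 - f r'.1.1)
        rw [map_add]
        ring
      map_smul' := fun a r => by
        refine Prod.ext rfl (Subtype.ext ?_)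
        show (f a * r.1.2) - f (a * r.1.1) = f a * (r.1.2 - f r.1.1)
        rw [map_mul]
        ring
      invFun := fun p => ⟨(p.1, f p.1 + p.2.1), by
        show (f p.1 + p.2.1) - f p.1 ∈ J
        simpa using p.2.2⟩
      left_inv := fun r => by
        refine Subtype.ext (Prod.ext rfl ?_)
        show f r.1.1 + (r.1.2 - f r.1.1) = r.1.2
        ring
      right_inv := fun p => by
        refine Prod.ext rfl (Subtype.ext ?_)
        show (f p.1 + p.2.1) - f p.1 = p.2.1
        ring }
  show (⨆ (nn : ℕ) (y : Fin nn → ↥(amalgamation f J))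
      (_ : ∀ j, y j ∈ idealExt f J 𝔞),
        kgrSeq ↥(amalgamation f J) ↥(amalgamation f J) y) ≤ _
  refine iSup_le fun nn => iSup_le fun y => iSup_le fun hy => ?_
  -- extract a finite generating family from `𝔞`
  have hy' : ∀ j, y j ∈ Submodule.span ↥(amalgamation f J) ((amalgIota f J) '' 𝔞) :=
    fun j => hy j
  choose T hT1 hT2 using fun j => Submodule.mem_span_finite_of_mem_span (hy' j)
  set U : Finset ↥(amalgamation f J) := Finset.univ.biUnion T with hU
  have hU1 : (U : Set ↥(amalgamation f J)) ⊆ (amalgIota f J) '' 𝔞 := by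
    intro r hr
    rw [hU] at hr
    simp only [Finset.coe_biUnion, Finset.mem_coe, Set.mem_iUnion] at hr
    obtain ⟨j, _, hj⟩ := hr
    exact hT1 j hj
  have hU2 : ∀ j, y j ∈ Submodule.span ↥(amalgamation f J) (U : Set ↥(amalgamation f J)) :=
    fun j => Submodule.span_mono (by
      intro r hr
      rw [hU]
      simp only [Finset.coe_biUnion, Finset.mem_coe, Set.mem_iUnion]
      exact ⟨j, Finset.mem_univ j, hr⟩) (hT2 j)
  set u : Fin U.card → ↥(amalgamation f J) := fun l => (U.equivFin.symm l : _) with hu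
  have hrange : Set.range u = (U : Set ↥(amalgamation f J)) := by
    ext r
    constructor
    · rintro ⟨l, rfl⟩
      exact (U.equivFin.symm l).2
    · intro hr
      exact ⟨U.equivFin ⟨r, hr⟩, by rw [hu]; simp⟩
  have hmem : ∀ l, ∃ aa, aa ∈ 𝔞 ∧ amalgIota f J aa = u l := by
    intro l
    obtain ⟨aa, h1, h2⟩ := hU1 (by rw [← hrange]; exact ⟨l, rfl⟩)
    exact ⟨aa, h1, h2⟩
  choose a ha hae using hmem
  have hua : u = fun l => amalgIota f J (a l) := funext fun l => (hae l).symm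
  have hspan : ∀ j, y j ∈ Ideal.span (Set.range u) := by
    intro j
    rw [hrange]
    exact hU2 j
  -- the chain of inequalities
  have h1 : kgrSeq ↥(amalgamation f J) ↥(amalgamation f J) y ≤
      kgrSeq ↥(amalgamation f J) ↥(amalgamation f J) u :=
    kgrSeq_le_of_span u y hspan
  have h2 : kgrSeq ↥(amalgamation f J) ↥(amalgamation f J) u =
      kgrSeq A ↥(amalgamation f J) a := by
    rw [hua]
    exact (kgrSeq_compHom (amalgIota f J) hsmulR a).symm
  have h3 : kgrSeq A ↥(amalgamation f J) a = kgrSeq A (A × ↥J) a := kgrSeq_equiv e a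
  have h4 : kgrSeq A (A × ↥J) a = min (kgrSeq A A a) (kgrSeq A ↥J a) := kgrSeq_prod a
  have h5 : kgrSeq A A a ≤ kgr A 𝔞 A :=
    le_iSup_of_le U.card (le_iSup_of_le a (le_iSup_of_le ha le_rfl))
  have h6 : kgrSeq A ↥J a ≤ kgrIdeal f J 𝔞 := by
    show kgrSeq A ↥J a ≤ ⨆ (n : ℕ) (x : Fin n → A) (_ : ∀ j, x j ∈ 𝔞), kgrSeq A ↥J x
    exact le_iSup_of_le U.card (le_iSup_of_le a (le_iSup_of_le ha le_rfl))
  calc kgrSeq ↥(amalgamation f J) ↥(amalgamation f J) y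
      ≤ kgrSeq ↥(amalgamation f J) ↥(amalgamation f J) u := h1
    _ = min (kgrSeq A A a) (kgrSeq A ↥J a) := by rw [h2, h3, h4]
    _ ≤ min (kgr A 𝔞 A) (kgrIdeal f J 𝔞) := min_le_min h5 h6

end Final
end

section
/- Let A and B be commutative rings, f : A → B a ring homomorphism, and J an ideal of B contained in the nil radical Nil(B). Let 𝔞 be an ideal of A and 𝔭 a prime ideal of A. Then: (1) 𝔭 is a minimal prime over 𝔞 if and only if 𝔭'^f is a minimal prime over 𝔞^e; (2) height 𝔞 = height 𝔞^e; (3) the set of minimal primes over 𝔭^e is exactly {𝔭'^f}, and in particular height 𝔭^e = height 𝔭'^f. -/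
section AmalgAux

variable {A B : Type*} [CommRing A] [CommRing B] (f : A →+* B) (J : Ideal B)

/-- The first projection `A ⋈^f J → A`. -/
def amalgPi : ↥(amalgamation f J) →+* A :=
  (RingHom.fst A B).comp (amalgamation f J).subtype

lemma comap_iota_comap_pi (p : Ideal A) :
    (p.comap (amalgPi f J)).comap (amalgIota f J) = p := by
  ext a; rfl

lemma sub_iota_pi_nilpotent (hJ : J ≤ nilradical B) (z : ↥(amalgamation f J)) :
    IsNilpotent (z - amalgIota f J (amalgPi f J z)) := by
  obtain ⟨n, hn⟩ := mem_nilradical.mp (hJ z.2)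
  refine ⟨n + 1, Subtype.ext ?_⟩
  have hv : ((z - amalgIota f J (amalgPi f J z) : ↥(amalgamation f J)) : A × B)
      = (0, (z : A × B).2 - f (z : A × B).1) := by
    apply Prod.ext <;> simp [amalgIota, amalgPi]
  calc ((z - amalgIota f J (amalgPi f J z) : ↥(amalgamation f J)) ^ (n + 1) : A × B)
      = ((z - amalgIota f J (amalgPi f J z) : ↥(amalgamation f J)) : A × B) ^ (n + 1) :=
        SubmonoidClass.coe_pow _ _
    _ = (0, (z : A × B).2 - f (z : A × B).1) ^ (n + 1) := by rw [hv]
    _ = 0 := by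
        apply Prod.ext
        · simp
        · show ((z : A × B).2 - f (z : A × B).1) ^ (n + 1) = 0
          rw [pow_succ, hn, zero_mul]

lemma mem_prime_iff_iota_pi_mem (hJ : J ≤ nilradical B)
    (q : Ideal ↥(amalgamation f J)) [q.IsPrime] (z : ↥(amalgamation f J)) :
    z ∈ q ↔ amalgIota f J (amalgPi f J z) ∈ q := by
  have hnil : z - amalgIota f J (amalgPi f J z) ∈ q :=
    nilradical_le_prime q (mem_nilradical.mpr (sub_iota_pi_nilpotent f J hJ z))
  constructor
  · intro hz
    have := q.sub_mem hz hnil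
    simpa using this
  · intro hz
    have := q.add_mem hz hnil
    simpa using this

lemma comap_pi_comap_iota (hJ : J ≤ nilradical B)
    (q : Ideal ↥(amalgamation f J)) [q.IsPrime] :
    (q.comap (amalgIota f J)).comap (amalgPi f J) = q := by
  ext z
  simp only [Ideal.mem_comap]
  exact (mem_prime_iff_iota_pi_mem f J hJ q z).symm

lemma primeAmalg_eq_comap (𝔭 : Ideal A) :
    primeAmalg f J 𝔭 = 𝔭.comap (amalgPi f J) := by
  ext z; rfl

lemma idealExt_le_iff (𝔞 : Ideal A) (q : Ideal ↥(amalgamation f J)) :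
    idealExt f J 𝔞 ≤ q ↔ 𝔞 ≤ q.comap (amalgIota f J) :=
  Ideal.map_le_iff_le_comap

/-- Part (1), as a standalone lemma. -/
lemma minimal_iff_aux (hJ : J ≤ nilradical B) (𝔞 𝔭 : Ideal A) (h𝔭 : 𝔭.IsPrime) :
    𝔭 ∈ 𝔞.minimalPrimes ↔ primeAmalg f J 𝔭 ∈ (idealExt f J 𝔞).minimalPrimes := by
  haveI := h𝔭
  rw [primeAmalg_eq_comap]
  constructor
  · rintro ⟨⟨h𝔭p, h𝔞𝔭⟩, hmin⟩
    refine ⟨⟨Ideal.IsPrime.comap _, ?_⟩, ?_⟩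
    · rw [idealExt_le_iff, comap_iota_comap_pi]; exact h𝔞𝔭
    · rintro Q ⟨hQp, hQa⟩ hle
      haveI := hQp
      have hcQ : (Q.comap (amalgIota f J)).IsPrime := Ideal.IsPrime.comap _
      have h1 : 𝔞 ≤ Q.comap (amalgIota f J) := (idealExt_le_iff f J 𝔞 Q).mp hQa
      have h2 : Q.comap (amalgIota f J) ≤ 𝔭 := by
        have := Ideal.comap_mono (f := amalgIota f J) hle
        rwa [comap_iota_comap_pi] at this
      have h3 : 𝔭 ≤ Q.comap (amalgIota f J) := hmin ⟨hcQ, h1⟩ h2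
      calc 𝔭.comap (amalgPi f J) ≤ (Q.comap (amalgIota f J)).comap (amalgPi f J) :=
            Ideal.comap_mono h3
        _ = Q := comap_pi_comap_iota f J hJ Q
  · rintro ⟨⟨hQp, hQa⟩, hmin⟩
    refine ⟨⟨h𝔭, ?_⟩, ?_⟩
    · have := (idealExt_le_iff f J 𝔞 _).mp hQa
      rwa [comap_iota_comap_pi] at this
    · rintro p ⟨hpp, h𝔞p⟩ hle
      have hcp : (p.comap (amalgPi f J)).IsPrime := by
        haveI := hpp; exact Ideal.IsPrime.comap _
      have h1 : idealExt f J 𝔞 ≤ p.comap (amalgPi f J) := by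
        rw [idealExt_le_iff, comap_iota_comap_pi]; exact h𝔞p
      have h2 : p.comap (amalgPi f J) ≤ 𝔭.comap (amalgPi f J) := Ideal.comap_mono hle
      have h3 := hmin ⟨hcp, h1⟩ h2
      have := Ideal.comap_mono (f := amalgIota f J) h3
      rwa [comap_iota_comap_pi, comap_iota_comap_pi] at this

lemma orderIso_height {α β : Type*} [Preorder α] [Preorder β] (e : α ≃o β) (a : α) :
    Order.height (e a) = Order.height a := by
  apply le_antisymm
  · apply Order.height_le
    intro p hp
    have h1 : (p.map e.symm e.symm.strictMono).last = a := by simp [hp]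
    have h2 : (p.length : ℕ∞) = (p.map e.symm e.symm.strictMono).length := rfl
    rw [h2, ← h1]
    exact Order.length_le_height_last
  · apply Order.height_le
    intro p hp
    have h1 : (p.map e e.strictMono).last = e a := by simp [hp]
    have h2 : (p.length : ℕ∞) = (p.map e e.strictMono).length := rfl
    rw [h2, ← h1]
    exact Order.length_le_height_last

/-- The order isomorphism `Spec (A ⋈^f J) ≃o Spec A` when `J ⊆ Nil B`. -/
noncomputable def amalgSpecIso (hJ : J ≤ nilradical B) :
    PrimeSpectrum ↥(amalgamation f J) ≃o PrimeSpectrum A where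
  toFun q := ⟨q.asIdeal.comap (amalgIota f J), Ideal.IsPrime.comap _⟩
  invFun p := ⟨p.asIdeal.comap (amalgPi f J), Ideal.IsPrime.comap _⟩
  left_inv q := PrimeSpectrum.ext (comap_pi_comap_iota f J hJ q.asIdeal)
  right_inv p := PrimeSpectrum.ext (comap_iota_comap_pi f J p.asIdeal)
  map_rel_iff' := by
    intro q₁ q₂
    constructor
    · intro h
      have h2 : q₁.asIdeal.comap (amalgIota f J) ≤ q₂.asIdeal.comap (amalgIota f J) := h
      have h3 := Ideal.comap_mono (f := amalgPi f J) h2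
      rw [comap_pi_comap_iota f J hJ, comap_pi_comap_iota f J hJ] at h3
      exact h3
    · intro h
      exact Ideal.comap_mono h

lemma idealHeight_congr {R : Type*} [CommRing R] {I I' : Ideal R}
    (h : ∀ q : PrimeSpectrum R, I ≤ q.asIdeal ↔ I' ≤ q.asIdeal) :
    idealHeight R I = idealHeight R I' := by
  unfold idealHeight
  exact iInf_congr fun q => by rw [h q]

end AmalgAux

set_option maxHeartbeats 1000000 in
/-- Assume `J ⊆ Nil(B)`, and let `𝔞` be an ideal and `𝔭` a prime of `A`.
Then: (1) `𝔭` is minimal over `𝔞` iff `𝔭'^f` is minimal over `𝔞^e`;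
(2) `height 𝔞 = height 𝔞^e`;
(3) `Min(𝔭^e) = {𝔭'^f}`, and in particular `height 𝔭^e = height 𝔭'^f`. -/
theorem minimalPrimes_amalgamation_of_nil {A B : Type*} [CommRing A] [CommRing B]
    (f : A →+* B) (J : Ideal B) (hJ : J ≤ nilradical B) (𝔞 𝔭 : Ideal A)
    (h𝔭 : 𝔭.IsPrime) :
    (𝔭 ∈ 𝔞.minimalPrimes ↔ primeAmalg f J 𝔭 ∈ (idealExt f J 𝔞).minimalPrimes) ∧
      idealHeight A 𝔞 = idealHeight ↥(amalgamation f J) (idealExt f J 𝔞) ∧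
      ((idealExt f J 𝔭).minimalPrimes = {primeAmalg f J 𝔭} ∧
        idealHeight ↥(amalgamation f J) (idealExt f J 𝔭) =
          idealHeight ↥(amalgamation f J) (primeAmalg f J 𝔭)) := by
  haveI := h𝔭
  refine ⟨minimal_iff_aux f J hJ 𝔞 𝔭 h𝔭, ?_, ?_, ?_⟩
  · -- heights equal
    unfold idealHeight
    apply le_antisymm
    · refine le_iInf fun Q => le_iInf fun hQ => ?_
      set p : PrimeSpectrum A := amalgSpecIso f J hJ Q with hp
      have h1 : 𝔞 ≤ p.asIdeal := (idealExt_le_iff f J 𝔞 Q.asIdeal).mp hQ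
      calc (⨅ (q : PrimeSpectrum A) (_ : 𝔞 ≤ q.asIdeal), Order.height q)
          ≤ Order.height p := iInf₂_le p h1
        _ = Order.height Q := orderIso_height (amalgSpecIso f J hJ) Q
    · refine le_iInf fun p => le_iInf fun hp => ?_
      set Q : PrimeSpectrum ↥(amalgamation f J) := (amalgSpecIso f J hJ).symm p with hQ
      have key : Q.asIdeal.comap (amalgIota f J) = p.asIdeal :=
        congrArg PrimeSpectrum.asIdeal ((amalgSpecIso f J hJ).apply_symm_apply p)
      have h1 : idealExt f J 𝔞 ≤ Q.asIdeal := by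
        rw [idealExt_le_iff, key]; exact hp
      calc (⨅ (q : PrimeSpectrum ↥(amalgamation f J)) (_ : idealExt f J 𝔞 ≤ q.asIdeal),
            Order.height q) ≤ Order.height Q := iInf₂_le Q h1
        _ = Order.height ((amalgSpecIso f J hJ) Q) :=
            (orderIso_height (amalgSpecIso f J hJ) Q).symm
        _ = Order.height p := by rw [hQ, (amalgSpecIso f J hJ).apply_symm_apply p]
  · -- Min(𝔭^e) = {𝔭'^f}
    have hself : 𝔭 ∈ 𝔭.minimalPrimes := by
      rw [Ideal.minimalPrimes_eq_subsingleton_self]; rfl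
    ext q
    constructor
    · intro hq
      have hqp : q.IsPrime := hq.1.1
      haveI := hqp
      set p : Ideal A := q.comap (amalgIota f J) with hpdef
      have hpp : p.IsPrime := Ideal.IsPrime.comap _
      have hqe : q = primeAmalg f J p := by
        rw [primeAmalg_eq_comap, hpdef, comap_pi_comap_iota f J hJ q]
      have hmem : p ∈ 𝔭.minimalPrimes := by
        rw [minimal_iff_aux f J hJ 𝔭 p hpp, ← hqe]; exact hq
      rw [Ideal.minimalPrimes_eq_subsingleton_self] at hmem
      have hp𝔭 : p = 𝔭 := hmem
      show q = primeAmalg f J 𝔭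
      rw [hqe, hp𝔭]
    · intro hq
      have hq' : q = primeAmalg f J 𝔭 := hq
      rw [hq', ← minimal_iff_aux f J hJ 𝔭 𝔭 h𝔭]
      exact hself
  · -- heights of 𝔭^e and 𝔭'^f
    have hext : idealExt f J 𝔭 ≤ primeAmalg f J 𝔭 := by
      rw [idealExt_le_iff, primeAmalg_eq_comap, comap_iota_comap_pi]
    refine idealHeight_congr fun Q => ⟨fun hQ => ?_, fun hQ => le_trans hext hQ⟩
    haveI := Q.2
    have h1 : 𝔭 ≤ Q.asIdeal.comap (amalgIota f J) := (idealExt_le_iff f J 𝔭 _).mp hQ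
    have h2 := Ideal.comap_mono (f := amalgPi f J) h1
    rw [comap_pi_comap_iota f J hJ Q.asIdeal] at h2
    rwa [primeAmalg_eq_comap]
end
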